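/- arXiv:1012.5165 — 9 statements merged into one kernel-verified Lean document; each statement's English description precedes it below -/
import Mathlib

section
/- For every n ≥ 1 and for X = L_α (and likewise X = L_β), the iterated splitting operator satisfies Δ_{n−1}·X = 𝔏_X^[n]·Δ_{n−1}, where 𝔏_X^[n] := ∑_{∅ ≠ A ⊆ Fin n} X^(A). -/
open Matrix


/-- The Markov generator `L_α = [[-1, 0], [1, 0]]`. -/
noncomputable def Lalpha : Matrix (Fin 2) (Fin 2) ℝ := !![-1, 0; 1, 0]

/-- The Markov generator `L_β = [[0, 1], [0, -1]]`. -/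
noncomputable def Lbeta : Matrix (Fin 2) (Fin 2) ℝ := !![0, 1; 0, -1]

/-- `X^(A)`: the operator on the `n`-fold tensor power `(ℝ²)^⊗n` (indexed by functions
`Fin n → Fin 2`) acting as `X` on the tensor factors in `A` and as the identity elsewhere:
`(X^(A))_{f,g} = (∏_{i ∈ A} X_{f(i),g(i)}) · (∏_{j ∉ A} [f(j) = g(j)])`. -/
noncomputable def opOn {n : ℕ} (X : Matrix (Fin 2) (Fin 2) ℝ) (A : Finset (Fin n)) :
    Matrix (Fin n → Fin 2) (Fin n → Fin 2) ℝ :=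
  fun f g => (∏ i ∈ A, X (f i) (g i)) * ∏ j ∈ Aᶜ, (if f j = g j then (1 : ℝ) else 0)

/-- `𝔏_X^[n] := ∑_{∅ ≠ A ⊆ Fin n} X^(A)`. -/
noncomputable def frakL (n : ℕ) (X : Matrix (Fin 2) (Fin 2) ℝ) :
    Matrix (Fin n → Fin 2) (Fin n → Fin 2) ℝ :=
  ∑ A ∈ Finset.univ.filter (fun A : Finset (Fin n) => A.Nonempty), opOn X A

/-- The iterated splitting operator `Δ_{n−1}`, with `(Δ_{n−1})_{f,k} = 1` iff `f` is the
constant function with value `k`. -/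
noncomputable def Delta (n : ℕ) : Matrix (Fin n → Fin 2) (Fin 2) ℝ :=
  fun f k => if f = fun _ => k then 1 else 0

lemma frakL_entry (n : ℕ) (X : Matrix (Fin 2) (Fin 2) ℝ) (f : Fin n → Fin 2) (k : Fin 2) :
    frakL n X f (fun _ => k) =
      (∏ i, (X (f i) k + if f i = k then (1:ℝ) else 0)) -
        (if f = fun _ => k then (1:ℝ) else 0) := by
  have hfilter : (Finset.univ.filter (fun A : Finset (Fin n) => A.Nonempty))
      = Finset.univ.erase ∅ := by
    ext A; simp [Finset.nonempty_iff_ne_empty]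
  have htot : ∑ A : Finset (Fin n), opOn X A f (fun _ => k)
      = ∏ i, (X (f i) k + if f i = k then (1:ℝ) else 0) := by
    rw [Finset.prod_add, Finset.powerset_univ]
    apply Finset.sum_congr rfl
    intro A _
    simp [opOn, Finset.compl_eq_univ_sdiff]
  have hempty : opOn X (∅ : Finset (Fin n)) f (fun _ => k)
      = (if f = fun _ => k then (1:ℝ) else 0) := by
    simp [opOn, Finset.prod_boole, funext_iff]
  unfold frakL
  rw [Matrix.sum_apply, hfilter, Finset.sum_erase_eq_sub (Finset.mem_univ _), htot, hempty]

lemma intertwine_gen (n : ℕ) (hn : 1 ≤ n) (X : Matrix (Fin 2) (Fin 2) ℝ) (v : Fin 2)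
    (hX : ∀ i k : Fin 2, X i k + (if i = k then (1:ℝ) else 0) = if i = v then 1 else 0) :
    Delta n * X = frakL n X * Delta n := by
  have hne : (fun _ : Fin n => (0 : Fin 2)) ≠ (fun _ => 1) := by
    intro h
    exact absurd (congrFun h ⟨0, hn⟩) (by decide)
  ext f k
  rw [Matrix.mul_apply, Matrix.mul_apply]
  have hR : ∑ g, frakL n X f g * Delta n g k = frakL n X f (fun _ => k) := by
    simp only [Delta, mul_ite, mul_one, mul_zero]
    rw [Finset.sum_ite_eq' Finset.univ (fun _ => k) (frakL n X f)]
    simp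
  rw [hR, frakL_entry]
  have hprod : (∏ i, (X (f i) k + if f i = k then (1:ℝ) else 0))
      = if f = fun _ => v then (1:ℝ) else 0 := by
    calc (∏ i, (X (f i) k + if f i = k then (1:ℝ) else 0))
        = ∏ i, (if f i = v then (1:ℝ) else 0) := by
          apply Finset.prod_congr rfl; intro i _; exact hX (f i) k
      _ = _ := by rw [Finset.prod_boole]; simp [funext_iff]
  rw [hprod]
  have hXe : ∀ i k : Fin 2, X i k
      = (if i = v then (1:ℝ) else 0) - (if i = k then (1:ℝ) else 0) := by
    intro i k; have := hX i k; linarith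
  simp only [Delta, ite_mul, one_mul, zero_mul, Fin.sum_univ_two]
  rw [hXe 0 k, hXe 1 k]
  by_cases h0 : f = fun _ => 0 <;> by_cases h1 : f = fun _ => 1
  · exact absurd (h0.symm.trans h1) hne
  · subst h0
    fin_cases v <;> fin_cases k <;> simp [hne, Ne.symm hne]
  · subst h1
    fin_cases v <;> fin_cases k <;> simp [hne, Ne.symm hne]
  · have hv : f ≠ fun _ => v := by fin_cases v <;> assumption
    have hk : f ≠ fun _ => k := by fin_cases k <;> assumption
    simp [h0, h1, hv, hk]

/-- For every `n ≥ 1`, `Δ_{n−1}·X = 𝔏_X^[n]·Δ_{n−1}` for `X = L_α` and `X = L_β`. -/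
theorem delta_intertwine (n : ℕ) (hn : 1 ≤ n) :
    Delta n * Lalpha = frakL n Lalpha * Delta n ∧
    Delta n * Lbeta = frakL n Lbeta * Delta n := by
  constructor
  · exact intertwine_gen n hn Lalpha 1
      (by intro i k; fin_cases i <;> fin_cases k <;> norm_num [Lalpha])
  · exact intertwine_gen n hn Lbeta 0
      (by intro i k; fin_cases i <;> fin_cases k <;> norm_num [Lbeta])
end

section
/- For every n ≥ 2 and x ∈ {α, β}, under the identification of functions Fin n → Fin 2 with pairs in Fin 2 × (Fin (n−1) → Fin 2) (splitting off the first coordinate), the recursion 𝔏_x^[n] = L_x ⊗ 𝔏_x^[n−1] + I₂ ⊗ 𝔏_x^[n−1] + L_x ⊗ I holds, where ⊗ is the Kronecker product, I₂ is the 2×2 identity and I is the identity matrix on (Fin (n−1) → Fin 2)-indexed vectors. -/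
open Matrix
open scoped Kronecker


lemma delta_prod {n : ℕ} (f g : Fin n → Fin 2) :
    (∏ j : Fin n, (if f j = g j then (1:ℝ) else 0)) = if f = g then 1 else 0 := by
  rw [Finset.prod_boole]
  simp [funext_iff]

lemma key (n : ℕ) (X : Matrix (Fin 2) (Fin 2) ℝ) (f g : Fin n → Fin 2) :
    frakL n X f g + (if f = g then (1:ℝ) else 0)
      = ∏ i : Fin n, (X (f i) (g i) + if f i = g i then 1 else 0) := by
  have h1 : ∑ A : Finset (Fin n), opOn X A f g
      = ∏ i : Fin n, (X (f i) (g i) + if f i = g i then 1 else 0) := by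
    rw [Finset.prod_add, ← Finset.powerset_univ]
    refine Finset.sum_congr rfl fun A _ => ?_
    simp [opOn, Finset.compl_eq_univ_sdiff]
  have h2 : frakL n X f g + opOn X ∅ f g = ∑ A : Finset (Fin n), opOn X A f g := by
    have : Finset.univ.filter (fun A : Finset (Fin n) => A.Nonempty)
        = Finset.univ.erase ∅ := by
      rw [← Finset.filter_ne']
      simp [Finset.nonempty_iff_ne_empty]
    rw [frakL, this]
    simp only [Matrix.sum_apply]
    rw [add_comm, Finset.add_sum_erase _ (fun A => opOn X A f g) (Finset.mem_univ ∅)]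
  have h3 : opOn X ∅ f g = if f = g then 1 else 0 := by
    simp [opOn, delta_prod]
  rw [← h1, ← h2, h3]

lemma rec_general (m : ℕ) (X : Matrix (Fin 2) (Fin 2) ℝ) :
    frakL (m + 1) X =
      Matrix.reindex (Fin.consEquiv (fun _ : Fin (m + 1) => Fin 2)) (Fin.consEquiv (fun _ : Fin (m + 1) => Fin 2))
        (X ⊗ₖ frakL m X + (1 : Matrix (Fin 2) (Fin 2) ℝ) ⊗ₖ frakL m X +
          X ⊗ₖ (1 : Matrix (Fin m → Fin 2) (Fin m → Fin 2) ℝ)) := by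
  ext f g
  have k1 := key (m+1) X f g
  have k2 := key m X (fun i : Fin m => f i.succ) (fun i : Fin m => g i.succ)
  rw [Fin.prod_univ_succ] at k1
  have hd : (if f = g then (1:ℝ) else 0)
      = (if f 0 = g 0 then (1:ℝ) else 0) *
        (if (fun i : Fin m => f i.succ) = (fun i : Fin m => g i.succ) then (1:ℝ) else 0) := by
    rw [← delta_prod f g, Fin.prod_univ_succ, delta_prod]
  rw [hd] at k1
  have he : ∀ h : Fin (m+1) → Fin 2,
      (Fin.consEquiv (fun _ : Fin (m + 1) => Fin 2)).symm h = (h 0, fun i : Fin m => h i.succ) := by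
    intro h
    ext i
    · rfl
    · rfl
  simp only [Matrix.reindex_apply, Equiv.symm_symm, Matrix.submatrix_apply,
    he, Matrix.add_apply, Matrix.kroneckerMap_apply, Matrix.one_apply]
  linear_combination k1 - (X (f 0) (g 0) + (if f 0 = g 0 then (1:ℝ) else 0)) * k2

/-- For every `n = m + 1 ≥ 2` and `x ∈ {α, β}`, under the identification of
`Fin (m+1) → Fin 2` with `Fin 2 × (Fin m → Fin 2)` (splitting off the first coordinate),
`𝔏_x^[n] = L_x ⊗ 𝔏_x^[n−1] + I₂ ⊗ 𝔏_x^[n−1] + L_x ⊗ I`. -/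
theorem frakL_recursion (m : ℕ) (hm : 1 ≤ m) :
    (frakL (m + 1) Lalpha =
      Matrix.reindex (Fin.consEquiv (fun _ : Fin (m + 1) => Fin 2)) (Fin.consEquiv (fun _ : Fin (m + 1) => Fin 2))
        (Lalpha ⊗ₖ frakL m Lalpha + (1 : Matrix (Fin 2) (Fin 2) ℝ) ⊗ₖ frakL m Lalpha +
          Lalpha ⊗ₖ (1 : Matrix (Fin m → Fin 2) (Fin m → Fin 2) ℝ))) ∧
    (frakL (m + 1) Lbeta =
      Matrix.reindex (Fin.consEquiv (fun _ : Fin (m + 1) => Fin 2)) (Fin.consEquiv (fun _ : Fin (m + 1) => Fin 2))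
        (Lbeta ⊗ₖ frakL m Lbeta + (1 : Matrix (Fin 2) (Fin 2) ℝ) ⊗ₖ frakL m Lbeta +
          Lbeta ⊗ₖ (1 : Matrix (Fin m → Fin 2) (Fin m → Fin 2) ℝ))) := by
  exact ⟨rec_general m Lalpha, rec_general m Lbeta⟩
end

section
/- For every n ≥ 1, the operators 𝔏_α^[n] and 𝔏_β^[n] satisfy the same algebraic relations as L_α and L_β: (𝔏_α^[n])² = 𝔏_β^[n]·𝔏_α^[n] = −𝔏_α^[n] and (𝔏_β^[n])² = 𝔏_α^[n]·𝔏_β^[n] = −𝔏_β^[n]. -/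
open Matrix


noncomputable def Tpow (n : ℕ) (M : Matrix (Fin 2) (Fin 2) ℝ) :
    Matrix (Fin n → Fin 2) (Fin n → Fin 2) ℝ :=
  fun f g => ∏ i, M (f i) (g i)

lemma Tpow_mul (n : ℕ) (M N : Matrix (Fin 2) (Fin 2) ℝ) :
    Tpow n M * Tpow n N = Tpow n (M * N) := by
  ext f g
  simp only [Tpow, Matrix.mul_apply]
  rw [Fintype.prod_sum (fun i k => M (f i) k * N k (g i))]
  exact Finset.sum_congr rfl fun h _ => Finset.prod_mul_distrib.symm

lemma Tpow_one (n : ℕ) : Tpow n (1 : Matrix (Fin 2) (Fin 2) ℝ) = 1 := by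
  ext f g
  simp [Tpow, Matrix.one_apply, Finset.prod_boole, funext_iff]

lemma opOn_empty {n : ℕ} (X : Matrix (Fin 2) (Fin 2) ℝ) : opOn X (∅ : Finset (Fin n)) = 1 := by
  ext f g
  simp [opOn, Matrix.one_apply, Finset.prod_boole, funext_iff]

lemma frakL_eq (n : ℕ) (X : Matrix (Fin 2) (Fin 2) ℝ) :
    frakL n X = Tpow n (X + 1) - 1 := by
  have htot : ∑ A : Finset (Fin n), opOn X A = Tpow n (X + 1) := by
    ext f g
    simp only [Matrix.sum_apply, opOn, Tpow, Matrix.add_apply, Matrix.one_apply]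
    rw [Fintype.prod_add (fun i => X (f i) (g i)) (fun i => if f i = g i then (1:ℝ) else 0)]
  have hsplit : ∑ A : Finset (Fin n), opOn X A = frakL n X + opOn X ∅ := by
    rw [frakL, ← Finset.sum_filter_add_sum_filter_not Finset.univ
      (fun A : Finset (Fin n) => A.Nonempty) (opOn X)]
    congr 1
    rw [show Finset.univ.filter (fun A : Finset (Fin n) => ¬A.Nonempty)
        = {∅} from by ext A; simp [Finset.not_nonempty_iff_eq_empty]]
    simp
  rw [← htot, hsplit, opOn_empty]
  abel

lemma P_idem : (Lalpha + 1) * (Lalpha + 1) = Lalpha + 1 ∧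
    (Lbeta + 1) * (Lbeta + 1) = Lbeta + 1 ∧
    (Lbeta + 1) * (Lalpha + 1) = Lbeta + 1 ∧
    (Lalpha + 1) * (Lbeta + 1) = Lalpha + 1 := by
  refine ⟨?_, ?_, ?_, ?_⟩ <;>
  · ext i j
    fin_cases i <;> fin_cases j <;>
      simp [Lalpha, Lbeta, Matrix.mul_apply, Fin.sum_univ_two, Matrix.one_apply]

/-- For every `n ≥ 1`, the operators `𝔏_α^[n]`, `𝔏_β^[n]` satisfy the same relations as
`L_α`, `L_β`: `(𝔏_α^[n])² = 𝔏_β^[n]·𝔏_α^[n] = −𝔏_α^[n]` and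
`(𝔏_β^[n])² = 𝔏_α^[n]·𝔏_β^[n] = −𝔏_β^[n]`. -/
theorem frakL_relations (n : ℕ) (hn : 1 ≤ n) :
    (frakL n Lalpha) ^ 2 = frakL n Lbeta * frakL n Lalpha ∧
    frakL n Lbeta * frakL n Lalpha = -frakL n Lalpha ∧
    (frakL n Lbeta) ^ 2 = frakL n Lalpha * frakL n Lbeta ∧
    frakL n Lalpha * frakL n Lbeta = -frakL n Lbeta := by
  obtain ⟨h1, h2, h3, h4⟩ := P_idem
  set A := Tpow n (Lalpha + 1) with hA
  set B := Tpow n (Lbeta + 1) with hB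
  have hAA : A * A = A := by rw [hA, Tpow_mul, h1]
  have hBB : B * B = B := by rw [hB, Tpow_mul, h2]
  have hBA : B * A = B := by rw [hA, hB, Tpow_mul, h3]
  have hAB : A * B = A := by rw [hA, hB, Tpow_mul, h4]
  have ha : frakL n Lalpha = A - 1 := frakL_eq n Lalpha
  have hb : frakL n Lbeta = B - 1 := frakL_eq n Lbeta
  have expand : ∀ P Q : Matrix (Fin n → Fin 2) (Fin n → Fin 2) ℝ,
      (P - 1) * (Q - 1) = P * Q - P - Q + 1 := fun P Q => by noncomm_ring
  rw [ha, hb]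
  refine ⟨?_, ?_, ?_, ?_⟩
  · rw [sq, expand, expand, hAA, hBA]; abel
  · rw [expand, hBA]; abel
  · rw [sq, expand, expand, hBB, hAB]; abel
  · rw [expand, hAB]; abel
end

section
/- For all real numbers α, β and every n ≥ 1, Δ_{n−1}·exp(α·L_α + β·L_β) = exp(α·𝔏_α^[n] + β·𝔏_β^[n])·Δ_{n−1}. -/
open Matrix


lemma core (n : ℕ) (s t : Fin n → ℝ) :
    ∑ A ∈ Finset.univ.filter (fun A : Finset (Fin n) => A.Nonempty),
      ((∏ i ∈ A, s i) * ∏ j ∈ Aᶜ, t j)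
    = (∏ i, (s i + t i)) - ∏ j, t j := by
  have h1 : ∀ A : Finset (Fin n), (∏ i ∈ A, s i) * ∏ j ∈ Aᶜ, t j
      = (∏ i ∈ A, s i) * ∏ j ∈ Finset.univ \ A, t j := by
    intro A; rw [Finset.compl_eq_univ_sdiff]
  have h2 : (∏ i, (s i + t i)) =
      ∑ A ∈ (Finset.univ : Finset (Fin n)).powerset,
        ((∏ i ∈ A, s i) * ∏ j ∈ Finset.univ \ A, t j) := Finset.prod_add s t Finset.univ
  rw [Finset.powerset_univ] at h2
  rw [← Finset.sum_filter_add_sum_filter_not Finset.univ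
      (fun A : Finset (Fin n) => A.Nonempty)
      (fun A => (∏ i ∈ A, s i) * ∏ j ∈ Finset.univ \ A, t j)] at h2
  have h3 : Finset.univ.filter (fun A : Finset (Fin n) => ¬ A.Nonempty) = {∅} := by
    ext A; simp [Finset.not_nonempty_iff_eq_empty]
  rw [h3, Finset.sum_singleton] at h2
  simp only [Finset.prod_empty, Finset.sdiff_empty, one_mul] at h2
  simp only [h1]
  linarith

lemma gen_intertwine (n : ℕ) (hn : 1 ≤ n) (k₀ : Fin 2) (X : Matrix (Fin 2) (Fin 2) ℝ)
    (hX : ∀ a k, X a k = if k = k₀ then (if a = k₀ then -1 else 1) else 0) :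
    frakL n X * Delta n = Delta n * X := by
  ext f k
  rw [Matrix.mul_apply, Matrix.mul_apply]
  have hL : ∑ g, frakL n X f g * Delta n g k = frakL n X f (fun _ => k) := by
    simp only [Delta, mul_ite, mul_one, mul_zero]
    rw [Finset.sum_ite_eq' Finset.univ (fun _ => k) (fun g => frakL n X f g)]
    simp
  rw [hL]
  have prod_ind : ∀ k' : Fin 2, (∏ j, (if f j = k' then (1:ℝ) else 0))
      = if f = (fun _ => k') then 1 else 0 := by
    intro k'
    rw [Finset.prod_boole]
    congr 1
    simp [funext_iff]
  have hfrak : frakL n X f (fun _ => k)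
      = (∏ i, (X (f i) k + if f i = k then 1 else 0)) - (if f = (fun _ => k) then 1 else 0) := by
    rw [← prod_ind k]
    have := core n (fun i => X (f i) k) (fun j => if f j = k then 1 else 0)
    rw [← this]
    simp only [frakL, opOn, Matrix.sum_apply]
  rw [hfrak, Fin.sum_univ_two]
  simp only [Delta]
  by_cases hk : k = k₀
  · subst hk
    have hfac : ∀ a : Fin 2, X a k + (if a = k then (1:ℝ) else 0) = if a ≠ k then 1 else 0 := by
      intro a; rw [hX]; by_cases h : a = k <;> simp [h]
    simp only [hfac]
    rw [Finset.prod_boole, hX 0, hX 1]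
    simp only [eq_self_iff_true, if_true]
    have hother : ∀ k' a : Fin 2, a ≠ k' ↔ a = (1 - k') := by decide
    have hall : (∀ i ∈ Finset.univ, f i ≠ k) ↔ f = (fun _ => (1 - k : Fin 2)) := by
      simp only [Finset.mem_univ, true_implies, funext_iff]
      exact forall_congr' fun i => hother k (f i)
    by_cases h0 : f = (fun _ => k)
    · have h1 : ¬ (∀ i ∈ Finset.univ, f i ≠ k) := by
        intro h; exact h ⟨0, hn⟩ (Finset.mem_univ _) (by rw [h0])
      have h2 : f ≠ (fun _ => (1 - k : Fin 2)) := by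
        rw [h0]; intro h
        have := congrFun h ⟨0, hn⟩
        revert this; have h3 : ∀ k' : Fin 2, k' ≠ 1 - k' := by decide
        have := h3 k
        simpa using this
      fin_cases k <;> simp_all
    · by_cases h1 : f = (fun _ => (1 - k : Fin 2))
      · have h2 : (∀ i ∈ Finset.univ, f i ≠ k) := hall.2 h1
        fin_cases k <;> simp_all
      · have h2 : ¬ (∀ i ∈ Finset.univ, f i ≠ k) := fun h => h1 (hall.1 h)
        fin_cases k <;> simp_all
  · have hz : ∀ a : Fin 2, X a k = 0 := by
      intro a; rw [hX]; simp [hk]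
    simp only [hz, zero_add, mul_zero, add_zero]
    rw [prod_ind k]
    ring

open NormedSpace in
lemma exp_intertwine {I J : Type*} [Fintype I] [DecidableEq I] [Nonempty I]
    [Fintype J] [DecidableEq J] [Nonempty J]
    (M : Matrix I I ℝ) (G : Matrix J J ℝ) (D : Matrix I J ℝ) (h : M * D = D * G) :
    exp M * D = D * exp G := by
  letI : SeminormedRing (Matrix I I ℝ) := Matrix.linftyOpSemiNormedRing
  letI : NormedRing (Matrix I I ℝ) := Matrix.linftyOpNormedRing
  letI : NormedAlgebra ℝ (Matrix I I ℝ) := Matrix.linftyOpNormedAlgebra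
  letI : SeminormedRing (Matrix J J ℝ) := Matrix.linftyOpSemiNormedRing
  letI : NormedRing (Matrix J J ℝ) := Matrix.linftyOpNormedRing
  letI : NormedAlgebra ℝ (Matrix J J ℝ) := Matrix.linftyOpNormedAlgebra
  have hpow : ∀ k : ℕ, M ^ k * D = D * G ^ k := by
    intro k
    induction k with
    | zero => simp
    | succ k ih =>
        rw [pow_succ, pow_succ, Matrix.mul_assoc, h, ← Matrix.mul_assoc, ih, Matrix.mul_assoc]
  have hsum1 : Summable (fun k : ℕ => ((Nat.factorial k : ℝ))⁻¹ • M ^ k) := expSeries_summable' M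
  have hsum2 : Summable (fun k : ℕ => ((Nat.factorial k : ℝ))⁻¹ • G ^ k) := expSeries_summable' G
  let L1 : Matrix I I ℝ →ₗ[ℝ] Matrix I J ℝ :=
    { toFun := fun X => X * D
      map_add' := fun X Y => Matrix.add_mul X Y D
      map_smul' := fun c X => Matrix.smul_mul c X D }
  let L2 : Matrix J J ℝ →ₗ[ℝ] Matrix I J ℝ :=
    { toFun := fun X => D * X
      map_add' := fun X Y => Matrix.mul_add D X Y
      map_smul' := fun c X => Matrix.mul_smul D c X }
  have c1 : Continuous L1 := L1.continuous_of_finiteDimensional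
  have c2 : Continuous L2 := L2.continuous_of_finiteDimensional
  have e1 : exp M * D = ∑' k : ℕ, (((Nat.factorial k : ℝ))⁻¹ • M ^ k) * D := by
    rw [exp_eq_tsum (𝕂 := ℝ)]
    exact (hsum1.hasSum.mapL ⟨L1, c1⟩).tsum_eq.symm ▸ rfl
  have e2 : D * exp G = ∑' k : ℕ, D * (((Nat.factorial k : ℝ))⁻¹ • G ^ k) := by
    rw [exp_eq_tsum (𝕂 := ℝ)]
    exact (hsum2.hasSum.mapL ⟨L2, c2⟩).tsum_eq.symm ▸ rfl
  rw [e1, e2]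
  congr 1
  funext k
  rw [Matrix.smul_mul, Matrix.mul_smul, hpow]

/-- For all real `α, β` and every `n ≥ 1`,
`Δ_{n−1}·exp(α·L_α + β·L_β) = exp(α·𝔏_α^[n] + β·𝔏_β^[n])·Δ_{n−1}`. -/
theorem delta_intertwine_exp (α β : ℝ) (n : ℕ) (hn : 1 ≤ n) :
    Delta n * NormedSpace.exp (α • Lalpha + β • Lbeta) =
      NormedSpace.exp (α • frakL n Lalpha + β • frakL n Lbeta) * Delta n := by
  have ha : frakL n Lalpha * Delta n = Delta n * Lalpha := by
    refine gen_intertwine n hn 0 Lalpha ?_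
    intro a k; fin_cases a <;> fin_cases k <;> norm_num [Lalpha]
  have hb : frakL n Lbeta * Delta n = Delta n * Lbeta := by
    refine gen_intertwine n hn 1 Lbeta ?_
    intro a k; fin_cases a <;> fin_cases k <;> norm_num [Lbeta]
  have h : (α • frakL n Lalpha + β • frakL n Lbeta) * Delta n
      = Delta n * (α • Lalpha + β • Lbeta) := by
    rw [Matrix.add_mul, Matrix.mul_add, Matrix.smul_mul, Matrix.smul_mul,
      Matrix.mul_smul, Matrix.mul_smul, ha, hb]
  exact (exp_intertwine _ _ _ h).symm
end

section
/- For every n and every subset A ⊆ Fin n, the operators 𝔏_α^A and 𝔏_β^A satisfy the same algebraic relations as L_α and L_β: (𝔏_α^A)² = 𝔏_β^A·𝔏_α^A = −𝔏_α^A and (𝔏_β^A)² = 𝔏_α^A·𝔏_β^A = −𝔏_β^A. -/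
open Matrix


/-- `𝔏_X^A := ∑_{∅ ≠ B ⊆ A} X^(B)`. -/
noncomputable def frakLA {n : ℕ} (X : Matrix (Fin 2) (Fin 2) ℝ) (A : Finset (Fin n)) :
    Matrix (Fin n → Fin 2) (Fin n → Fin 2) ℝ :=
  ∑ B ∈ A.powerset.filter (fun B => B.Nonempty), opOn X B

lemma delta_sum (a b : Fin 2) :
    ∑ k : Fin 2, (if a = k then (1:ℝ) else 0) * (if k = b then 1 else 0)
      = if a = b then 1 else 0 := by
  fin_cases a <;> fin_cases b <;> norm_num [Fin.sum_univ_two]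

lemma opOn_mul {n : ℕ} (Y Z : Matrix (Fin 2) (Fin 2) ℝ) (A : Finset (Fin n)) :
    opOn Y A * opOn Z A = opOn (Y * Z) A := by
  ext f g
  rw [Matrix.mul_apply]
  have key : ∀ h : Fin n → Fin 2,
      opOn Y A f h * opOn Z A h g
        = ∏ i : Fin n, (if i ∈ A then Y (f i) (h i) * Z (h i) (g i)
            else (if f i = h i then (1:ℝ) else 0) * (if h i = g i then 1 else 0)) := by
    intro h
    rw [← Finset.prod_mul_prod_compl A]
    rw [Finset.prod_congr rfl (fun i hi => if_pos hi),
        Finset.prod_congr rfl (fun i hi => if_neg (by simpa using hi))]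
    simp only [opOn, Finset.prod_mul_distrib]
    ring
  simp only [key]
  have step := Finset.prod_univ_sum (fun _ : Fin n => (Finset.univ : Finset (Fin 2)))
    (fun i k => (if i ∈ A then Y (f i) k * Z k (g i)
            else (if f i = k then (1:ℝ) else 0) * (if k = g i then 1 else 0)))
  rw [Fintype.piFinset_univ] at step
  rw [← step, ← Finset.prod_mul_prod_compl A]
  have h1 : (∏ i ∈ A, ∑ k : Fin 2, (if i ∈ A then Y (f i) k * Z k (g i)
            else (if f i = k then (1:ℝ) else 0) * (if k = g i then 1 else 0)))
      = ∏ i ∈ A, (Y * Z) (f i) (g i) := by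
    refine Finset.prod_congr rfl fun i hi => ?_
    simp only [if_pos hi]
    rw [Matrix.mul_apply]
  have h2 : (∏ i ∈ Aᶜ, ∑ k : Fin 2, (if i ∈ A then Y (f i) k * Z k (g i)
            else (if f i = k then (1:ℝ) else 0) * (if k = g i then 1 else 0)))
      = ∏ i ∈ Aᶜ, (if f i = g i then (1:ℝ) else 0) := by
    refine Finset.prod_congr rfl fun i hi => ?_
    simp only [if_neg (Finset.mem_compl.mp hi)]
    exact delta_sum _ _
  rw [h1, h2]
  rfl

lemma opOn_one_add {n : ℕ} (X : Matrix (Fin 2) (Fin 2) ℝ) (A : Finset (Fin n)) :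
    opOn (1 + X) A = ∑ B ∈ A.powerset, opOn X B := by
  ext f g
  simp only [Matrix.sum_apply]
  unfold opOn
  have hentry : ∀ i ∈ A, (1 + X) (f i) (g i)
      = X (f i) (g i) + (if f i = g i then (1:ℝ) else 0) := by
    intro i _
    simp [Matrix.add_apply, Matrix.one_apply, add_comm]
  rw [Finset.prod_congr rfl hentry, Finset.prod_add, Finset.sum_mul]
  refine Finset.sum_congr rfl fun B hB => ?_
  rw [Finset.mem_powerset] at hB
  have hc : Bᶜ = (A \ B) ∪ Aᶜ := by
    ext i
    simp only [Finset.mem_compl, Finset.mem_union, Finset.mem_sdiff]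
    by_cases hi : i ∈ A
    · constructor
      · intro h; exact Or.inl ⟨hi, h⟩
      · rintro (⟨_, h⟩ | h) <;> [exact h; exact absurd hi h]
    · constructor
      · intro _; exact Or.inr hi
      · intro _ h; exact hi (hB h)
  have hdisj : Disjoint (A \ B) Aᶜ :=
    Disjoint.mono_left (Finset.sdiff_subset) (disjoint_compl_right)
  rw [hc, Finset.prod_union hdisj]
  ring

lemma frakLA_eq {n : ℕ} (X : Matrix (Fin 2) (Fin 2) ℝ) (A : Finset (Fin n)) :
    frakLA X A = opOn (1 + X) A - 1 := by
  rw [opOn_one_add]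
  have : A.powerset = insert ∅ (A.powerset.filter (fun B => B.Nonempty)) := by
    ext B
    simp only [Finset.mem_insert, Finset.mem_filter, Finset.mem_powerset]
    constructor
    · intro hB
      rcases B.eq_empty_or_nonempty with h | h
      · exact Or.inl h
      · exact Or.inr ⟨hB, h⟩
    · rintro (rfl | ⟨h, _⟩)
      · exact Finset.empty_subset A
      · exact h
  rw [this, Finset.sum_insert (by simp [Finset.not_nonempty_empty]), opOn_empty, frakLA]
  abel

lemma mat1 : (1 + Lalpha) * (1 + Lalpha) = 1 + Lalpha := by
  ext i j
  fin_cases i <;> fin_cases j <;>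
    simp [Lalpha, Matrix.mul_apply, Fin.sum_univ_two, Matrix.one_apply, Matrix.add_apply]

lemma mat2 : (1 + Lbeta) * (1 + Lbeta) = 1 + Lbeta := by
  ext i j
  fin_cases i <;> fin_cases j <;>
    simp [Lbeta, Matrix.mul_apply, Fin.sum_univ_two, Matrix.one_apply, Matrix.add_apply]

lemma mat3 : (1 + Lbeta) * (1 + Lalpha) = 1 + Lbeta := by
  ext i j
  fin_cases i <;> fin_cases j <;>
    simp [Lalpha, Lbeta, Matrix.mul_apply, Fin.sum_univ_two, Matrix.one_apply,
      Matrix.add_apply]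

lemma mat4 : (1 + Lalpha) * (1 + Lbeta) = 1 + Lalpha := by
  ext i j
  fin_cases i <;> fin_cases j <;>
    simp [Lalpha, Lbeta, Matrix.mul_apply, Fin.sum_univ_two, Matrix.one_apply,
      Matrix.add_apply]

/-- For every `n` and every `A ⊆ Fin n`, the operators `𝔏_α^A`, `𝔏_β^A` satisfy the same
relations as `L_α`, `L_β`: `(𝔏_α^A)² = 𝔏_β^A·𝔏_α^A = −𝔏_α^A` and
`(𝔏_β^A)² = 𝔏_α^A·𝔏_β^A = −𝔏_β^A`. -/
theorem frakLA_relations (n : ℕ) (A : Finset (Fin n)) :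
    (frakLA Lalpha A) ^ 2 = frakLA Lbeta A * frakLA Lalpha A ∧
    frakLA Lbeta A * frakLA Lalpha A = -frakLA Lalpha A ∧
    (frakLA Lbeta A) ^ 2 = frakLA Lalpha A * frakLA Lbeta A ∧
    frakLA Lalpha A * frakLA Lbeta A = -frakLA Lbeta A := by
  set Ma := opOn (1 + Lalpha) A with hMa
  set Mb := opOn (1 + Lbeta) A with hMb
  have haa : Ma * Ma = Ma := by rw [hMa, opOn_mul, mat1]
  have hbb : Mb * Mb = Mb := by rw [hMb, opOn_mul, mat2]
  have hba : Mb * Ma = Mb := by rw [hMa, hMb, opOn_mul, mat3]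
  have hab : Ma * Mb = Ma := by rw [hMa, hMb, opOn_mul, mat4]
  rw [frakLA_eq, frakLA_eq, ← hMa, ← hMb]
  have expand : ∀ P Q : Matrix (Fin n → Fin 2) (Fin n → Fin 2) ℝ,
      (P - 1) * (Q - 1) = P * Q - P - Q + 1 := by
    intro P Q; noncomm_ring
  refine ⟨?_, ?_, ?_, ?_⟩
  · rw [sq, expand, expand, haa, hba]; abel
  · rw [expand, hba]; abel
  · rw [sq, expand, expand, hbb, hab]; abel
  · rw [expand, hab]; abel
end

section
/- For all subsets A ⊆ B ⊆ Fin n, the binary-symmetric rate operator satisfies M_A·|B⟩ = |B \ A⟩ − |B⟩. -/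
open Matrix


/-- The binary-symmetric rate operator `M_A := 𝔏_α^A + 𝔏_β^A`. -/
noncomputable def MA {n : ℕ} (A : Finset (Fin n)) :
    Matrix (Fin n → Fin 2) (Fin n → Fin 2) ℝ :=
  frakLA Lalpha A + frakLA Lbeta A

/-- `|B⟩`: the standard basis vector of `ℝ^(Fin n → Fin 2)` at the indicator function of
`B ⊆ Fin n`. -/
noncomputable def ket {n : ℕ} (B : Finset (Fin n)) : (Fin n → Fin 2) → ℝ :=
  fun f => if f = (fun i => if i ∈ B then 1 else 0) then 1 else 0

/-- For `A ⊆ B ⊆ Fin n`, `M_A·|B⟩ = |B \ A⟩ − |B⟩`. -/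
theorem MA_ket_subset (n : ℕ) (A B : Finset (Fin n)) (h : A ⊆ B) :
    (MA A).mulVec (ket B) = ket (B \ A) - ket B := by
  funext f
  set χ : Fin n → Fin 2 := fun i => if i ∈ B then 1 else 0 with hχ
  set χ' : Fin n → Fin 2 := fun i => if i ∈ B \ A then 1 else 0 with hχ'
  have hmv : (MA A).mulVec (ket B) f = MA A f χ := by
    simp only [Matrix.mulVec, dotProduct, ket, mul_ite, mul_one, mul_zero]
    rw [Finset.sum_ite_eq' Finset.univ χ (fun g => MA A f g)]
    simp
  -- alpha part vanishes
  have halpha : frakLA Lalpha A f χ = 0 := by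
    unfold frakLA
    rw [Matrix.sum_apply]
    apply Finset.sum_eq_zero
    intro S hS
    simp only [Finset.mem_filter, Finset.mem_powerset] at hS
    obtain ⟨hSA, ⟨i, hi⟩⟩ := hS
    have hχi : χ i = 1 := by simp [hχ, h (hSA hi)]
    have hz : Lalpha (f i) (χ i) = 0 := by
      rw [hχi]
      have h2 : f i = 0 ∨ f i = 1 := by omega
      rcases h2 with h2 | h2 <;> simp [h2, Lalpha]
    unfold opOn
    rw [Finset.prod_eq_zero hi hz, zero_mul]
  -- beta part : full powerset sum
  have hbeta : ∑ S ∈ A.powerset, opOn Lbeta S f χ = ket (B \ A) f := by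
    have hterm : ∀ S ∈ A.powerset, opOn Lbeta S f χ
        = ((∏ i ∈ S, Lbeta (f i) (χ i)) * ∏ j ∈ A \ S, (if f j = χ j then (1:ℝ) else 0))
          * ∏ j ∈ Aᶜ, (if f j = χ j then (1:ℝ) else 0) := by
      intro S hS
      rw [Finset.mem_powerset] at hS
      have hcompl : Sᶜ = (A \ S) ∪ Aᶜ := by
        ext j
        simp only [Finset.mem_compl, Finset.mem_union, Finset.mem_sdiff]
        constructor
        · intro hj
          by_cases hjA : j ∈ A
          · exact Or.inl ⟨hjA, hj⟩
          · exact Or.inr hjA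
        · rintro (⟨_, hj⟩ | hj)
          · exact hj
          · exact fun hjS => hj (hS hjS)
      have hdisj : Disjoint (A \ S) Aᶜ :=
        (disjoint_compl_right).mono_left (Finset.sdiff_subset)
      unfold opOn
      rw [hcompl, Finset.prod_union hdisj, ← mul_assoc]
    rw [Finset.sum_congr rfl hterm, ← Finset.sum_mul, ← Finset.prod_add]
    have hb : ∀ i ∈ A, (Lbeta (f i) (χ i) + if f i = χ i then (1:ℝ) else 0)
        = if f i = χ' i then 1 else 0 := by
      intro i hiA
      have h1 : χ i = 1 := by simp [hχ, h hiA]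
      have h0 : χ' i = 0 := by simp [hχ', hiA]
      rw [h1, h0]
      have h2 : f i = 0 ∨ f i = 1 := by omega
      rcases h2 with h2 | h2 <;> norm_num [h2, Lbeta]
    have hK : ∀ j ∈ Aᶜ, (if f j = χ j then (1:ℝ) else 0) = if f j = χ' j then 1 else 0 := by
      intro j hj
      rw [Finset.mem_compl] at hj
      have : χ j = χ' j := by simp [hχ, hχ', Finset.mem_sdiff, hj]
      rw [this]
    rw [Finset.prod_congr rfl hb, Finset.prod_congr rfl hK, Finset.prod_mul_prod_compl]
    rw [Finset.prod_boole]
    simp only [ket, hχ', Finset.mem_univ, forall_true_left]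
    by_cases hf : f = χ'
    · simp [hf, funext_iff] at *
    · rw [if_neg hf, if_neg]
      intro hall
      exact hf (funext hall)
  -- empty set term
  have hempty : opOn Lbeta (∅ : Finset (Fin n)) f χ = ket B f := by
    unfold opOn
    rw [Finset.prod_empty, one_mul, Finset.compl_empty, Finset.prod_boole]
    simp only [ket, hχ, Finset.mem_univ, forall_true_left]
    by_cases hf : f = χ
    · simp [hf, funext_iff] at *
    · rw [if_neg, if_neg hf]
      intro hall
      exact hf (funext hall)
  -- split the powerset sum
  have hsplitset : A.powerset = insert (∅ : Finset (Fin n)) (A.powerset.filter (fun S => S.Nonempty)) := by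
    ext S
    simp only [Finset.mem_insert, Finset.mem_filter, Finset.mem_powerset]
    constructor
    · intro hS
      by_cases hSe : S = ∅
      · exact Or.inl hSe
      · exact Or.inr ⟨hS, Finset.nonempty_of_ne_empty hSe⟩
    · rintro (rfl | ⟨hS, _⟩)
      · exact Finset.empty_subset _
      · exact hS
  have hnotmem : (∅ : Finset (Fin n)) ∉ A.powerset.filter (fun S => S.Nonempty) := by
    simp [Finset.not_nonempty_empty]
  have hbeta' : frakLA Lbeta A f χ = ket (B \ A) f - ket B f := by
    unfold frakLA
    rw [Matrix.sum_apply]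
    have := hbeta
    rw [hsplitset, Finset.sum_insert hnotmem] at this
    linarith [this, hempty]
  show (MA A).mulVec (ket B) f = (ket (B \ A) - ket B) f
  rw [hmv]
  show (frakLA Lalpha A + frakLA Lbeta A) f χ = _
  rw [Matrix.add_apply, halpha, hbeta', Pi.sub_apply, zero_add]
end

section
/- For all subsets A, B ⊆ Fin n with A ∩ B = ∅, the binary-symmetric rate operator satisfies M_A·|B⟩ = |B ∪ A⟩ − |B⟩. -/
open Matrix


lemma pow_sum_powerset {ι : Type*} [DecidableEq ι] (s : Finset ι) :
    ∑ t ∈ s.powerset, (-1 : ℝ) ^ t.card = if s = ∅ then 1 else 0 := by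
  induction s using Finset.induction with
  | empty => simp
  | @insert a s ha ih =>
    rw [Finset.sum_powerset_insert ha]
    have h1 : ∑ t ∈ s.powerset, (-1:ℝ) ^ (insert a t).card
        = ∑ t ∈ s.powerset, (-1) * (-1:ℝ) ^ t.card := by
      refine Finset.sum_congr rfl fun t ht => ?_
      rw [Finset.card_insert_of_notMem (fun hat => ha (Finset.mem_powerset.mp ht hat))]
      ring
    rw [h1, ← Finset.mul_sum, ih, if_neg (Finset.insert_ne_empty a s)]
    ring

lemma key_s15 {ι : Type*} [DecidableEq ι] (A D : Finset ι) (hDA : D ⊆ A) :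
    ∑ C ∈ A.powerset.filter (fun C => C.Nonempty),
      (if D ⊆ C then ((-1:ℝ)) ^ ((C \ D).card) else 0)
      = (if D = A then 1 else 0) - (if D = ∅ then 1 else 0) := by
  rw [← Finset.sum_filter, Finset.filter_filter]
  have hbij := Finset.sum_nbij' (s := A.powerset.filter (fun C => C.Nonempty ∧ D ⊆ C))
    (t := (A \ D).powerset.filter (fun E => (D ∪ E).Nonempty))
    (f := fun C => ((-1:ℝ)) ^ ((C \ D).card)) (g := fun E => ((-1:ℝ)) ^ E.card)
    (fun C => C \ D) (fun E => D ∪ E)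
    (by
      intro C hC
      simp only [Finset.mem_filter, Finset.mem_powerset] at hC ⊢
      exact ⟨Finset.sdiff_subset_sdiff hC.1 le_rfl, by
        rw [Finset.union_sdiff_of_subset hC.2.2]; exact hC.2.1⟩)
    (by
      intro E hE
      simp only [Finset.mem_filter, Finset.mem_powerset] at hE ⊢
      exact ⟨Finset.union_subset hDA (hE.1.trans Finset.sdiff_subset), hE.2,
        Finset.subset_union_left⟩)
    (by
      intro C hC
      simp only [Finset.mem_filter, Finset.mem_powerset] at hC
      show D ∪ (C \ D) = C
      rw [Finset.union_sdiff_of_subset hC.2.2])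
    (by
      intro E hE
      simp only [Finset.mem_filter, Finset.mem_powerset] at hE
      show (D ∪ E) \ D = E
      rw [Finset.union_sdiff_cancel_left]
      exact Finset.disjoint_left.mpr (fun x hx hx' => (Finset.mem_sdiff.mp (hE.1 hx')).2 hx))
    (fun C _ => rfl)
  rw [hbij]
  by_cases hD : D = ∅
  · subst hD
    simp only [Finset.empty_union, Finset.sdiff_empty, if_pos rfl]
    simp only [show ((∅:Finset ι) = A) ↔ (A = ∅) from eq_comm, if_true]
    have h2 := Finset.sum_filter_add_sum_filter_not A.powerset (fun E => E.Nonempty)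
      (fun E => ((-1:ℝ)) ^ E.card)
    have h3 : A.powerset.filter (fun E => ¬ E.Nonempty) = {∅} := by
      ext E
      simp only [Finset.mem_filter, Finset.mem_powerset, Finset.not_nonempty_iff_eq_empty,
        Finset.mem_singleton, and_iff_right_iff_imp]
      rintro rfl; exact Finset.empty_subset A
    rw [h3, pow_sum_powerset] at h2
    simp only [Finset.sum_singleton, Finset.card_empty, pow_zero] at h2
    linarith
  · have hDne : D.Nonempty := Finset.nonempty_iff_ne_empty.mpr hD
    rw [Finset.filter_true_of_mem (fun E _ => hDne.mono Finset.subset_union_left)]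
    rw [pow_sum_powerset]
    have hiff : A \ D = ∅ ↔ D = A := by
      rw [Finset.sdiff_eq_empty_iff_subset]
      exact ⟨fun h' => le_antisymm hDA h', fun h' => h' ▸ le_rfl⟩
    simp [hiff, hD]

/-- For `A, B ⊆ Fin n` with `A ∩ B = ∅`, `M_A·|B⟩ = |B ∪ A⟩ − |B⟩`. -/
theorem MA_ket_disjoint (n : ℕ) (A B : Finset (Fin n)) (h : A ∩ B = ∅) :
    (MA A).mulVec (ket B) = ket (B ∪ A) - ket B := by
  classical
  funext f
  set g0 : Fin n → Fin 2 := fun i => if i ∈ B then 1 else 0 with hg0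
  set g1 : Fin n → Fin 2 := fun i => if i ∈ B ∪ A then 1 else 0 with hg1
  have hdisj : ∀ i ∈ A, i ∉ B := fun i hi hi' =>
    (Finset.eq_empty_iff_forall_notMem.mp h i) (Finset.mem_inter.mpr ⟨hi, hi'⟩)
  have hg0A : ∀ i ∈ A, g0 i = 0 := fun i hi => by simp [hg0, hdisj i hi]
  have hg1g0 : ∀ j, j ∉ A → g1 j = g0 j := by
    intro j hj
    simp only [hg1, hg0, Finset.mem_union]
    by_cases hjB : j ∈ B <;> simp [hjB, hj]
  -- collapse mulVec
  have hcollapse : (MA A).mulVec (ket B) f = MA A f g0 := by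
    simp only [Matrix.mulVec, dotProduct, ket, mul_ite, mul_one, mul_zero]
    rw [Finset.sum_ite_eq' Finset.univ g0 (fun g => MA A f g)]
    simp
  rw [hcollapse]
  show MA A f g0 = ket (B ∪ A) f - ket B f
  have hketA : ket (B ∪ A) f = if f = g1 then 1 else 0 := rfl
  have hketB : ket B f = if f = g0 then 1 else 0 := rfl
  have hbeta : ∀ C ∈ A.powerset.filter (fun C => C.Nonempty), opOn Lbeta C f g0 = 0 := by
    intro C hC
    simp only [Finset.mem_filter, Finset.mem_powerset] at hC
    obtain ⟨hCA, i, hi⟩ := hC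
    unfold opOn
    rw [Finset.prod_eq_zero hi, zero_mul]
    rw [hg0A i (hCA hi)]
    generalize f i = x
    fin_cases x <;> simp [Lbeta]
  have hMA : MA A f g0 = ∑ C ∈ A.powerset.filter (fun C => C.Nonempty), opOn Lalpha C f g0 := by
    simp only [MA, frakLA, Matrix.add_apply, Matrix.sum_apply]
    rw [Finset.sum_eq_zero hbeta, add_zero]
  rw [hMA, hketA, hketB]
  by_cases hcase : ∀ j, j ∉ A → f j = g0 j
  · -- support of f-vs-g0 differences contained in A
    set D : Finset (Fin n) := A.filter (fun i => f i = 1) with hD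
    have hDA : D ⊆ A := Finset.filter_subset _ _
    have hterm : ∀ C ∈ A.powerset.filter (fun C => C.Nonempty),
        opOn Lalpha C f g0 = if D ⊆ C then ((-1:ℝ)) ^ ((C \ D).card) else 0 := by
      intro C hC
      simp only [Finset.mem_filter, Finset.mem_powerset] at hC
      obtain ⟨hCA, -⟩ := hC
      unfold opOn
      have p1 : ∏ i ∈ C, Lalpha (f i) (g0 i) = ∏ i ∈ C, (if i ∈ D then (1:ℝ) else -1) := by
        refine Finset.prod_congr rfl fun i hi => ?_
        rw [hg0A i (hCA hi)]
        by_cases hfi : f i = 1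
        · rw [if_pos (Finset.mem_filter.mpr ⟨hCA hi, hfi⟩), hfi]
          simp [Lalpha]
        · have hf0 : f i = 0 := by omega
          have hiD : i ∉ D := fun hiD => hfi (Finset.mem_filter.mp hiD).2
          rw [if_neg hiD, hf0]
          simp [Lalpha]
      have p2 : ∏ j ∈ Cᶜ, (if f j = g0 j then (1:ℝ) else 0) = if D ⊆ C then 1 else 0 := by
        by_cases hDC : D ⊆ C
        · rw [if_pos hDC]
          refine Finset.prod_eq_one fun j hj => ?_
          have hjC : j ∉ C := Finset.mem_compl.mp hj
          by_cases hjA : j ∈ A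
          · have hjD : j ∉ D := fun hjD => hjC (hDC hjD)
            have hfj : f j ≠ 1 := fun hfj => hjD (Finset.mem_filter.mpr ⟨hjA, hfj⟩)
            have hfj0 : f j = 0 := by omega
            rw [if_pos (by rw [hfj0, hg0A j hjA])]
          · rw [if_pos (hcase j hjA)]
        · rw [if_neg hDC]
          obtain ⟨i, hiD, hiC⟩ := Finset.not_subset.mp hDC
          refine Finset.prod_eq_zero (Finset.mem_compl.mpr hiC) ?_
          obtain ⟨hiA, hfi⟩ := Finset.mem_filter.mp hiD
          rw [if_neg (by rw [hfi, hg0A i hiA]; exact one_ne_zero)]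
      rw [p1, p2]
      by_cases hDC : D ⊆ C
      · rw [if_pos hDC, if_pos hDC, mul_one]
        rw [Finset.prod_ite, Finset.prod_const_one, Finset.prod_const, one_mul]
        congr 1
        rw [Finset.sdiff_eq_filter]
      · rw [if_neg hDC, if_neg hDC, mul_zero]
    rw [Finset.sum_congr rfl hterm, key_s15 A D hDA]
    have e1 : (f = g1) ↔ (D = A) := by
      constructor
      · intro hf
        refine Finset.Subset.antisymm hDA fun i hiA => ?_
        refine Finset.mem_filter.mpr ⟨hiA, ?_⟩
        have : f i = g1 i := congrFun hf i
        rw [this]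
        simp [hg1, hiA]
      · intro hDeq
        funext i
        by_cases hiA : i ∈ A
        · have hiD : i ∈ D := hDeq ▸ hiA
          rw [(Finset.mem_filter.mp hiD).2]
          simp [hg1, hiA]
        · rw [hcase i hiA, hg1g0 i hiA]
    have e2 : (f = g0) ↔ (D = ∅) := by
      constructor
      · intro hf
        refine Finset.filter_eq_empty_iff.mpr fun i hiA => ?_
        have : f i = g0 i := congrFun hf i
        rw [this, hg0A i hiA]
        exact zero_ne_one
      · intro hDeq
        funext i
        by_cases hiA : i ∈ A
        · have : f i ≠ 1 := fun hfi =>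
            (Finset.eq_empty_iff_forall_notMem.mp hDeq i) (Finset.mem_filter.mpr ⟨hiA, hfi⟩)
          have hf0 : f i = 0 := by omega
          rw [hf0, hg0A i hiA]
        · exact hcase i hiA
    simp only [e1, e2]
  · -- f differs from g0 outside A : everything vanishes
    push_neg at hcase
    obtain ⟨j, hjA, hj⟩ := hcase
    have hsum : ∀ C ∈ A.powerset.filter (fun C => C.Nonempty), opOn Lalpha C f g0 = 0 := by
      intro C hC
      simp only [Finset.mem_filter, Finset.mem_powerset] at hC
      have hjC : j ∈ Cᶜ := Finset.mem_compl.mpr (fun hjC => hjA (hC.1 hjC))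
      unfold opOn
      have hz : (if f j = g0 j then (1:ℝ) else 0) = 0 := if_neg hj
      rw [Finset.prod_eq_zero hjC hz, mul_zero]
    rw [Finset.sum_eq_zero hsum]
    have hne1 : f ≠ g1 := fun hf => hj (by rw [congrFun hf j, hg1g0 j hjA])
    have hne0 : f ≠ g0 := fun hf => hj (congrFun hf j)
    rw [if_neg hne1, if_neg hne0, sub_zero]
end

section
/- For subsets A, B ⊆ Fin n such that either A ⊆ B or A ∩ B = ∅, one has M_A·|B⟩ = (K^(A) − I)·|B⟩, where I is the identity matrix on (Fin n → Fin 2)-indexed vectors. -/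
open Matrix


/-- The permutation matrix `K = [[0,1],[1,0]]`. -/
noncomputable def Kmat : Matrix (Fin 2) (Fin 2) ℝ := !![0, 1; 1, 0]

lemma prod_ite_univ {n : ℕ} (f g : Fin n → Fin 2) :
    (∏ j : Fin n, if f j = g j then (1:ℝ) else 0) = if f = g then 1 else 0 := by
  by_cases h : f = g
  · subst h; simp
  · rw [if_neg h]
    obtain ⟨j, hj⟩ := Function.ne_iff.mp h
    exact Finset.prod_eq_zero (Finset.mem_univ j) (if_neg hj)

lemma key_s16 {n : ℕ} (A : Finset (Fin n)) (X Y : Matrix (Fin 2) (Fin 2) ℝ) (f g : Fin n → Fin 2)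
    (hY : ∀ i ∈ A, Y (f i) (g i) = 0)
    (hX : ∀ i ∈ A, X (f i) (g i) + (if f i = g i then (1:ℝ) else 0) = Kmat (f i) (g i)) :
    (∑ C ∈ A.powerset.filter (fun C => C.Nonempty), opOn X C f g)
      + (∑ C ∈ A.powerset.filter (fun C => C.Nonempty), opOn Y C f g)
      = opOn Kmat A f g - (if f = g then 1 else 0) := by
  have hYzero : ∑ C ∈ A.powerset.filter (fun C => C.Nonempty), opOn Y C f g = 0 := by
    refine Finset.sum_eq_zero fun C hC => ?_
    simp only [Finset.mem_filter, Finset.mem_powerset] at hC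
    obtain ⟨hCA, i, hi⟩ := hC
    have h0 : (∏ i ∈ C, Y (f i) (g i)) = 0 :=
      Finset.prod_eq_zero hi (hY i (hCA hi))
    simp [opOn, h0]
  rw [hYzero, add_zero]
  have hfilter : A.powerset.filter (fun C => C.Nonempty) = A.powerset.erase ∅ := by
    ext C
    simp [Finset.nonempty_iff_ne_empty, and_comm]
  have hempty : opOn X ∅ f g = (if f = g then (1:ℝ) else 0) := by
    simp [opOn, prod_ite_univ]
  have hsum : ∑ C ∈ A.powerset, opOn X C f g = opOn Kmat A f g := by
    have step : ∀ C ∈ A.powerset, opOn X C f g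
        = ((∏ i ∈ C, X (f i) (g i)) * ∏ j ∈ A \ C, (if f j = g j then (1:ℝ) else 0))
          * ∏ j ∈ Aᶜ, (if f j = g j then (1:ℝ) else 0) := by
      intro C hC
      rw [Finset.mem_powerset] at hC
      have hcompl : Cᶜ = (A \ C) ∪ Aᶜ := by
        ext j
        have := @hC j
        simp only [Finset.mem_compl, Finset.mem_union, Finset.mem_sdiff]
        tauto
      have hdisj : Disjoint (A \ C) Aᶜ :=
        disjoint_compl_right.mono_left Finset.sdiff_subset
      rw [opOn, hcompl, Finset.prod_union hdisj, mul_assoc]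
    rw [Finset.sum_congr rfl step, ← Finset.sum_mul, ← Finset.prod_add,
      Finset.prod_congr rfl hX, opOn]
  rw [hfilter, Finset.sum_erase_eq_sub (Finset.empty_mem_powerset A), hsum, hempty]

lemma Lalpha_col1 (a : Fin 2) : Lalpha a 1 = 0 := by fin_cases a <;> simp [Lalpha]
lemma Lbeta_col0 (a : Fin 2) : Lbeta a 0 = 0 := by fin_cases a <;> simp [Lbeta]
lemma Lbeta_K1 (a : Fin 2) : Lbeta a 1 + (if a = 1 then (1:ℝ) else 0) = Kmat a 1 := by
  fin_cases a <;> norm_num [Lbeta, Kmat]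
lemma Lalpha_K0 (a : Fin 2) : Lalpha a 0 + (if a = 0 then (1:ℝ) else 0) = Kmat a 0 := by
  fin_cases a <;> norm_num [Lalpha, Kmat]

/-- For `A, B ⊆ Fin n` with `A ⊆ B` or `A ∩ B = ∅`, `M_A·|B⟩ = (K^(A) − I)·|B⟩`. -/
theorem MA_ket_eq_K (n : ℕ) (A B : Finset (Fin n)) (h : A ⊆ B ∨ A ∩ B = ∅) :
    (MA A).mulVec (ket B) =
      (opOn Kmat A - (1 : Matrix (Fin n → Fin 2) (Fin n → Fin 2) ℝ)).mulVec (ket B) := by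
  funext f
  have hcol : ∀ M : Matrix (Fin n → Fin 2) (Fin n → Fin 2) ℝ,
      M.mulVec (ket B) f = M f (fun i => if i ∈ B then 1 else 0) := by
    intro M
    simp [mulVec, dotProduct, ket, mul_ite, mul_one, mul_zero]
  set g : Fin n → Fin 2 := fun i => if i ∈ B then 1 else 0 with hg
  rw [hcol, hcol]
  simp only [MA, frakLA, Matrix.add_apply, Matrix.sub_apply, Matrix.one_apply,
    Matrix.sum_apply]
  rcases h with hAB | hAB
  · have hg1 : ∀ i ∈ A, g i = 1 := fun i hi => if_pos (hAB hi)
    rw [add_comm]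
    have := key_s16 A Lbeta Lalpha f g
      (fun i hi => by rw [hg1 i hi]; exact Lalpha_col1 _)
      (fun i hi => by rw [hg1 i hi]; exact Lbeta_K1 _)
    exact this
  · have hg0 : ∀ i ∈ A, g i = 0 := by
      intro i hi
      have : i ∉ B := fun hiB => by
        have : i ∈ A ∩ B := Finset.mem_inter.mpr ⟨hi, hiB⟩
        simp [hAB] at this
      exact if_neg this
    have := key_s16 A Lalpha Lbeta f g
      (fun i hi => by rw [hg0 i hi]; exact Lbeta_col0 _)
      (fun i hi => by rw [hg0 i hi]; exact Lalpha_K0 _)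
    exact this
end

section
/- Let n ≥ 2 and let S be a finite family of subsets of Fin n with 1 ≤ |A| ≤ n−1 for each A ∈ S, which is pairwise compatible: for all A, B ∈ S, A ⊆ B or B ⊆ A or A ∩ B = ∅. Let τ : S → ℝ be any weights, let π₀, π₁ ∈ ℝ, and set v := π₀·|∅⟩ + π₁·|Fin n⟩. Then the 𝔏-representation and the K-representation of the phylogenetic tensor coincide: exp(∑_{A∈S, |A|=1} τ(A)·M_A) · exp(∑_{A∈S, |A|=2} τ(A)·M_A) · ⋯ · exp(∑_{A∈S, |A|=n−1} τ(A)·M_A) · v = exp(∑_{A∈S} τ(A)·(K^(A) − I)) · v, where the left-hand factors are composed in order of increasing cardinality from left to right and I is the identity matrix on (Fin n → Fin 2)-indexed vectors. -/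
open Matrix


namespace PhyloAux

variable {n : ℕ}

/-- the indicator function of `C`. -/
def ind (C : Finset (Fin n)) : Fin n → Fin 2 := fun i => if i ∈ C then 1 else 0

lemma ket_apply (C : Finset (Fin n)) (f : Fin n → Fin 2) :
    ket C f = if f = ind C then (1 : ℝ) else 0 := rfl

lemma fin2_cases (x : Fin 2) : x = 0 ∨ x = 1 := by omega

lemma eq_ind (f : Fin n → Fin 2) : f = ind (Finset.univ.filter fun i => f i = 1) := by
  funext i
  rcases fin2_cases (f i) with h | h <;> simp [ind, h]

lemma ket_eq_prod (C : Finset (Fin n)) (f : Fin n → Fin 2) :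
    ket C f = ∏ j, (if f j = ind C j then (1 : ℝ) else 0) := by
  rw [Fintype.prod_boole]
  by_cases h : f = ind C
  · rw [ket_apply, if_pos h, if_pos (fun i => congrFun h i)]
  · rw [ket_apply, if_neg h, if_neg (fun hc => h (funext hc))]

lemma ket_split (a : Fin n) (C : Finset (Fin n)) (f : Fin n → Fin 2) :
    ket C f = (if f a = ind C a then (1 : ℝ) else 0) *
      ∏ j ∈ ({a}ᶜ : Finset (Fin n)), (if f j = ind C j then (1 : ℝ) else 0) := by
  rw [ket_eq_prod]
  exact Fintype.prod_eq_mul_prod_compl a _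

lemma mulVec_ket (M : Matrix (Fin n → Fin 2) (Fin n → Fin 2) ℝ) (C : Finset (Fin n)) :
    M.mulVec (ket C) = fun f => M f (ind C) := by
  funext f
  simp [Matrix.mulVec, dotProduct, ket_apply, mul_ite, mul_one, mul_zero,
    Finset.sum_ite_eq']

lemma ext_of_mulVec_ket {M N : Matrix (Fin n → Fin 2) (Fin n → Fin 2) ℝ}
    (h : ∀ C, M.mulVec (ket C) = N.mulVec (ket C)) : M = N := by
  ext f g
  have hg := eq_ind g
  have h1 := congrFun (h (Finset.univ.filter fun i => g i = 1)) f
  rw [mulVec_ket, mulVec_ket] at h1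
  simpa [← hg] using h1

lemma opOn_empty (X : Matrix (Fin 2) (Fin 2) ℝ) :
    opOn (n := n) X ∅ = 1 := by
  ext f g
  simp [opOn, Matrix.one_apply, Finset.prod_boole, funext_iff]

lemma opOn_mul_opOn (X : Matrix (Fin 2) (Fin 2) ℝ) {a : Fin n} {B : Finset (Fin n)}
    (ha : a ∉ B) : opOn X {a} * opOn X B = opOn X (insert a B) := by
  ext f g
  rw [Matrix.mul_apply]
  rw [Finset.sum_eq_single (Function.update f a (g a))]
  · have h1 : ∏ j ∈ ({a}ᶜ : Finset (Fin n)),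
        (if f j = Function.update f a (g a) j then (1 : ℝ) else 0) = 1 := by
      apply Finset.prod_eq_one
      intro j hj
      rw [Function.update_of_ne (by simpa using hj)]
      simp
    have h2 : ∏ i ∈ B, X (Function.update f a (g a) i) (g i) = ∏ i ∈ B, X (f i) (g i) := by
      apply Finset.prod_congr rfl
      intro i hi
      rw [Function.update_of_ne (fun hia => ha (by rw [← hia]; exact hi))]
    have haB : a ∈ Bᶜ := by simpa using ha
    have h3 : ∏ j ∈ Bᶜ, (if Function.update f a (g a) j = g j then (1 : ℝ) else 0) =
        ∏ j ∈ (insert a B)ᶜ, (if f j = g j then (1 : ℝ) else 0) := by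
      rw [Finset.prod_eq_mul_prod_sdiff_singleton_of_mem haB]
      have hone : (if Function.update f a (g a) a = g a then (1 : ℝ) else 0) = 1 := by
        rw [Function.update_self]
        simp
      rw [hone, one_mul]
      apply Finset.prod_congr
      · rw [Finset.compl_insert, Finset.erase_eq]
      · intro j hj
        simp only [Finset.mem_compl, Finset.mem_insert, not_or] at hj
        rw [Function.update_of_ne hj.1]
    simp only [opOn, Finset.prod_singleton, Function.update_self, h1, h2, h3]
    rw [Finset.prod_insert ha]
    ring
  · intro h _ hne
    by_cases hja : h a = g a
    · have hex : ∃ j, j ≠ a ∧ h j ≠ f j := by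
        by_contra hc
        push_neg at hc
        apply hne
        funext j
        by_cases hj : j = a
        · subst hj; rw [Function.update_self]; exact hja
        · rw [Function.update_of_ne hj]; exact hc j hj
      obtain ⟨j, hj, hfj⟩ := hex
      apply mul_eq_zero_of_left
      apply mul_eq_zero_of_right
      refine Finset.prod_eq_zero (i := j) (by simpa using hj) ?_
      rw [if_neg (fun h' => hfj h'.symm)]
    · apply mul_eq_zero_of_right
      apply mul_eq_zero_of_right
      refine Finset.prod_eq_zero (i := a) (by simpa using ha) ?_
      rw [if_neg hja]
  · intro hmem
    exact absurd (Finset.mem_univ _) hmem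

lemma frakLA_insert (X : Matrix (Fin 2) (Fin 2) ℝ) {a : Fin n} {A : Finset (Fin n)}
    (ha : a ∉ A) :
    frakLA X (insert a A) = frakLA X A + opOn X {a} * (1 + frakLA X A) := by
  have hsum : ∑ B ∈ A.powerset, opOn X B = 1 + frakLA X A := by
    rw [← Finset.sum_filter_add_sum_filter_not A.powerset (fun B => B.Nonempty)]
    have h0 : A.powerset.filter (fun B => ¬B.Nonempty) = {∅} := by
      ext B
      simp [Finset.not_nonempty_iff_eq_empty]
      rintro rfl
      exact Finset.empty_subset A
    rw [h0, Finset.sum_singleton, opOn_empty, frakLA, add_comm]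
  have himg : (A.powerset.image (insert a)).filter (fun B => B.Nonempty) =
      A.powerset.image (insert a) := by
    apply Finset.filter_true_of_mem
    intro B hB
    obtain ⟨B', _, rfl⟩ := Finset.mem_image.mp hB
    exact Finset.insert_nonempty a B'
  have hdisj : Disjoint (A.powerset.filter (fun B => B.Nonempty))
      ((A.powerset.image (insert a)).filter (fun B => B.Nonempty)) := by
    rw [Finset.disjoint_left]
    intro B hB hB'
    rw [Finset.mem_filter, Finset.mem_powerset] at hB
    rw [himg] at hB'
    obtain ⟨B', _, rfl⟩ := Finset.mem_image.mp hB'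
    exact ha (hB.1 (Finset.mem_insert_self a B'))
  have hinj : ∀ B ∈ A.powerset, ∀ B' ∈ A.powerset, insert a B = insert a B' → B = B' := by
    intro B hB B' hB' h
    rw [Finset.mem_powerset] at hB hB'
    have h1 : (insert a B).erase a = (insert a B').erase a := by rw [h]
    rwa [Finset.erase_insert (fun hx => ha (hB hx)),
      Finset.erase_insert (fun hx => ha (hB' hx))] at h1
  rw [frakLA, Finset.powerset_insert, Finset.filter_union, Finset.sum_union hdisj, himg,
    Finset.sum_image hinj]
  congr 1
  rw [← hsum, Finset.mul_sum]
  apply Finset.sum_congr rfl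
  intro B hB
  rw [Finset.mem_powerset] at hB
  rw [opOn_mul_opOn X (fun hx => ha (hB hx))]

lemma ind_insert_ne (a : Fin n) (C : Finset (Fin n)) {j : Fin n} (hj : j ≠ a) :
    ind (insert a C) j = ind C j := by
  simp [ind, Finset.mem_insert, hj]

lemma ind_erase_ne (a : Fin n) (C : Finset (Fin n)) {j : Fin n} (hj : j ≠ a) :
    ind (C.erase a) j = ind C j := by
  simp [ind, Finset.mem_erase, hj]

lemma Lalpha_apply_one (x : Fin 2) : Lalpha x 1 = 0 := by
  fin_cases x <;> simp [Lalpha]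

lemma Lbeta_apply_zero (x : Fin 2) : Lbeta x 0 = 0 := by
  fin_cases x <;> simp [Lbeta]

lemma opOn_alpha_singleton (a : Fin n) (C : Finset (Fin n)) :
    (opOn Lalpha {a}).mulVec (ket C) =
      if a ∈ C then 0 else ket (insert a C) - ket C := by
  rw [mulVec_ket]
  by_cases hC : a ∈ C
  · rw [if_pos hC]
    funext f
    have h1 : ind C a = 1 := by simp [ind, hC]
    simp [opOn, h1, Lalpha_apply_one]
  · rw [if_neg hC]
    funext f
    have h0 : ind C a = 0 := by simp [ind, hC]
    have h1 : ind (insert a C) a = 1 := by simp [ind]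
    have hsplit : ∀ D : Finset (Fin n), (∀ j, j ≠ a → ind D j = ind C j) →
        ket D f = (if f a = ind D a then (1 : ℝ) else 0) *
          ∏ j ∈ ({a}ᶜ : Finset (Fin n)), (if f j = ind C j then (1 : ℝ) else 0) := by
      intro D hD
      rw [ket_split a D f]
      congr 1
      apply Finset.prod_congr rfl
      intro j hj
      rw [hD j (by simpa using hj)]
    have hket1 := hsplit (insert a C) (fun j hj => ind_insert_ne a C hj)
    have hket2 := hsplit C (fun _ _ => rfl)
    rw [Pi.sub_apply, hket1, hket2, h1, h0]
    show (∏ i ∈ ({a} : Finset (Fin n)), Lalpha (f i) (ind C i)) * _ = _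
    rw [Finset.prod_singleton, h0]
    rcases fin2_cases (f a) with hfa | hfa <;>
      · rw [hfa]
        norm_num [Lalpha]

lemma opOn_beta_singleton (a : Fin n) (C : Finset (Fin n)) :
    (opOn Lbeta {a}).mulVec (ket C) =
      if a ∈ C then ket (C.erase a) - ket C else 0 := by
  rw [mulVec_ket]
  by_cases hC : a ∈ C
  · rw [if_pos hC]
    funext f
    have h1 : ind C a = 1 := by simp [ind, hC]
    have h0 : ind (C.erase a) a = 0 := by simp [ind]
    have hsplit : ∀ D : Finset (Fin n), (∀ j, j ≠ a → ind D j = ind C j) →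
        ket D f = (if f a = ind D a then (1 : ℝ) else 0) *
          ∏ j ∈ ({a}ᶜ : Finset (Fin n)), (if f j = ind C j then (1 : ℝ) else 0) := by
      intro D hD
      rw [ket_split a D f]
      congr 1
      apply Finset.prod_congr rfl
      intro j hj
      rw [hD j (by simpa using hj)]
    have hket1 := hsplit (C.erase a) (fun j hj => ind_erase_ne a C hj)
    have hket2 := hsplit C (fun _ _ => rfl)
    rw [Pi.sub_apply, hket1, hket2, h1, h0]
    show (∏ i ∈ ({a} : Finset (Fin n)), Lbeta (f i) (ind C i)) * _ = _
    rw [Finset.prod_singleton, h1]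
    rcases fin2_cases (f a) with hfa | hfa <;>
      · rw [hfa]
        norm_num [Lbeta]
  · rw [if_neg hC]
    funext f
    have h0 : ind C a = 0 := by simp [ind, hC]
    simp [opOn, h0, Lbeta_apply_zero]

lemma frakL_alpha_mulVec (A C : Finset (Fin n)) :
    (frakLA Lalpha A).mulVec (ket C) = ket (C ∪ A) - ket C := by
  induction A using Finset.induction_on with
  | empty =>
      have : frakLA (n := n) Lalpha ∅ = 0 := by
        rw [frakLA]
        apply Finset.sum_eq_zero
        intro B hB
        simp only [Finset.powerset_empty, Finset.mem_filter, Finset.mem_singleton] at hB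
        exact absurd (hB.1 ▸ hB.2) (by simp)
      rw [this, Matrix.zero_mulVec, Finset.union_empty, sub_self]
  | @insert a A ha ih =>
      rw [frakLA_insert Lalpha ha, Matrix.add_mulVec, ← Matrix.mulVec_mulVec,
        Matrix.add_mulVec, Matrix.one_mulVec, ih]
      have hCA : ket C + (ket (C ∪ A) - ket C) = ket (C ∪ A) := by abel
      rw [hCA, opOn_alpha_singleton]
      by_cases haCA : a ∈ C ∪ A
      · rw [if_pos haCA]
        have : C ∪ insert a A = C ∪ A := by
          rw [Finset.union_insert, Finset.insert_eq_self.mpr haCA]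
        rw [this, add_zero]
      · rw [if_neg haCA]
        have : insert a (C ∪ A) = C ∪ insert a A := by
          rw [Finset.union_insert]
        rw [this]
        abel

lemma frakL_beta_mulVec (A C : Finset (Fin n)) :
    (frakLA Lbeta A).mulVec (ket C) = ket (C \ A) - ket C := by
  induction A using Finset.induction_on with
  | empty =>
      have : frakLA (n := n) Lbeta ∅ = 0 := by
        rw [frakLA]
        apply Finset.sum_eq_zero
        intro B hB
        simp only [Finset.powerset_empty, Finset.mem_filter, Finset.mem_singleton] at hB
        exact absurd (hB.1 ▸ hB.2) (by simp)
      rw [this, Matrix.zero_mulVec, Finset.sdiff_empty, sub_self]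
  | @insert a A ha ih =>
      rw [frakLA_insert Lbeta ha, Matrix.add_mulVec, ← Matrix.mulVec_mulVec,
        Matrix.add_mulVec, Matrix.one_mulVec, ih]
      have hCA : ket C + (ket (C \ A) - ket C) = ket (C \ A) := by abel
      rw [hCA, opOn_beta_singleton]
      by_cases haCA : a ∈ C \ A
      · rw [if_pos haCA]
        have : (C \ A).erase a = C \ insert a A := by
          ext x
          simp only [Finset.mem_erase, Finset.mem_sdiff, Finset.mem_insert]
          tauto
        rw [this]
        abel
      · rw [if_neg haCA]
        have : C \ insert a A = C \ A := by
          have ha' : a ∉ C ∨ a ∈ A := by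
            by_contra hc
            push_neg at hc
            exact haCA (Finset.mem_sdiff.mpr hc)
          ext x
          simp only [Finset.mem_sdiff, Finset.mem_insert]
          constructor
          · rintro ⟨hx, hx2⟩; exact ⟨hx, fun h => hx2 (Or.inr h)⟩
          · rintro ⟨hx, hx2⟩
            refine ⟨hx, fun h => ?_⟩
            rcases h with rfl | h
            · rcases ha' with h' | h'
              · exact h' hx
              · exact hx2 h'
            · exact hx2 h
        rw [this, add_zero]

lemma MA_mulVec (A C : Finset (Fin n)) :
    (MA A).mulVec (ket C) = ket (C ∪ A) + ket (C \ A) - ket C - ket C := by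
  rw [MA, Matrix.add_mulVec, frakL_alpha_mulVec, frakL_beta_mulVec]
  abel

lemma Kmat_apply (x y : Fin 2) : Kmat x y = if x = y then 0 else 1 := by
  fin_cases x <;> fin_cases y <;> simp [Kmat]

lemma ind_symmDiff_eq_iff (C A : Finset (Fin n)) (f : Fin n → Fin 2) (i : Fin n) (hi : i ∈ A) :
    (f i = ind (symmDiff C A) i) ↔ ¬(f i = ind C i) := by
  by_cases hC : i ∈ C
  · have h1 : ind C i = 1 := by simp [ind, hC]
    have h2 : ind (symmDiff C A) i = 0 := by
      simp [ind, Finset.mem_symmDiff, hC, hi]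
    rw [h1, h2]
    rcases fin2_cases (f i) with h | h <;> simp [h]
  · have h1 : ind C i = 0 := by simp [ind, hC]
    have h2 : ind (symmDiff C A) i = 1 := by
      simp [ind, Finset.mem_symmDiff, hC, hi]
    rw [h1, h2]
    rcases fin2_cases (f i) with h | h <;> simp [h]

lemma ind_symmDiff_eq_of_not_mem (C A : Finset (Fin n)) (i : Fin n) (hi : i ∉ A) :
    ind (symmDiff C A) i = ind C i := by
  by_cases hC : i ∈ C <;> simp [ind, Finset.mem_symmDiff, hC, hi]

lemma opOn_K_mulVec (A C : Finset (Fin n)) :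
    (opOn Kmat A).mulVec (ket C) = ket (symmDiff C A) := by
  rw [mulVec_ket]
  funext f
  show (∏ i ∈ A, Kmat (f i) (ind C i)) * (∏ j ∈ Aᶜ, if f j = ind C j then (1 : ℝ) else 0) =
    ket (symmDiff C A) f
  have h1 : ∏ i ∈ A, Kmat (f i) (ind C i) =
      if (∀ i ∈ A, ¬(f i = ind C i)) then (1 : ℝ) else 0 := by
    have hterm : ∀ i ∈ A, Kmat (f i) (ind C i) = if ¬(f i = ind C i) then (1 : ℝ) else 0 := by
      intro i _
      rw [Kmat_apply]
      by_cases h : f i = ind C i <;> simp [h]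
    rw [Finset.prod_congr rfl hterm, Finset.prod_boole]
    convert rfl
  rw [h1, ket_apply]
  rw [ite_mul, one_mul, zero_mul]
  by_cases hall : ∀ i ∈ A, ¬(f i = ind C i)
  · rw [if_pos hall, Finset.prod_boole]
    congr 1
    · apply propext
      constructor
      · intro h
        funext i
        by_cases hi : i ∈ A
        · exact (ind_symmDiff_eq_iff C A f i hi).mpr (hall i hi)
        · rw [ind_symmDiff_eq_of_not_mem C A i hi]
          exact h i (by simpa using hi)
      · intro h i hi
        rw [congrFun h i]
        by_cases hiA : i ∈ A
        · rw [ind_symmDiff_eq_of_not_mem C A i (by simpa using hi)]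
        · rw [ind_symmDiff_eq_of_not_mem C A i (by simpa using hi)]
  · rw [if_neg hall]
    push_neg at hall
    obtain ⟨i, hiA, hfi⟩ := hall
    rw [if_neg]
    intro h
    have := congrFun h i
    rw [(ind_symmDiff_eq_iff C A f i hiA)] at this
    exact this hfi

/-! ### Good sets and the invariant subspace -/

variable (S : Finset (Finset (Fin n)))

def Good (k : ℕ) (C : Finset (Fin n)) : Prop :=
  ∀ A ∈ S, A.card ≤ k → A ⊆ C ∨ A ∩ C = ∅

lemma good_empty (k : ℕ) : Good S k ∅ := fun A _ _ => Or.inr (Finset.inter_empty A)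

lemma good_univ (k : ℕ) : Good S k Finset.univ := fun A _ _ => Or.inl (Finset.subset_univ A)

lemma good_symmDiff {k : ℕ} {C A : Finset (Fin n)}
    (hC : Good S k C) (hA : ∀ A' ∈ S, A'.card ≤ k → A' ⊆ A ∨ A' ∩ A = ∅) :
    Good S k (symmDiff C A) := by
  intro A' hA' hcard
  rcases hC A' hA' hcard with h1 | h1 <;> rcases hA A' hA' hcard with h2 | h2
  · right
    rw [Finset.eq_empty_iff_forall_notMem]
    intro x hx
    rw [Finset.mem_inter, Finset.mem_symmDiff] at hx
    obtain ⟨hx1, hx2⟩ := hx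
    rcases hx2 with ⟨_, h⟩ | ⟨_, h⟩
    · exact h (h2 hx1)
    · exact h (h1 hx1)
  · left
    intro x hx
    rw [Finset.mem_symmDiff]
    left
    refine ⟨h1 hx, fun hxA => ?_⟩
    have : x ∈ A' ∩ A := Finset.mem_inter.mpr ⟨hx, hxA⟩
    rw [h2] at this
    exact absurd this (Finset.notMem_empty x)
  · left
    intro x hx
    rw [Finset.mem_symmDiff]
    right
    refine ⟨h2 hx, fun hxC => ?_⟩
    have : x ∈ A' ∩ C := Finset.mem_inter.mpr ⟨hx, hxC⟩
    rw [h1] at this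
    exact absurd this (Finset.notMem_empty x)
  · right
    rw [Finset.eq_empty_iff_forall_notMem]
    intro x hx
    rw [Finset.mem_inter, Finset.mem_symmDiff] at hx
    obtain ⟨hx1, hx2⟩ := hx
    have hxC : x ∉ C := fun h => by
      have : x ∈ A' ∩ C := Finset.mem_inter.mpr ⟨hx1, h⟩
      rw [h1] at this; exact absurd this (Finset.notMem_empty x)
    have hxA : x ∉ A := fun h => by
      have : x ∈ A' ∩ A := Finset.mem_inter.mpr ⟨hx1, h⟩
      rw [h2] at this; exact absurd this (Finset.notMem_empty x)
    rcases hx2 with ⟨h, _⟩ | ⟨h, _⟩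
    · exact hxC h
    · exact hxA h

/-- The invariant subspace spanned by the `Good` kets. -/
noncomputable def W (k : ℕ) : Submodule ℝ ((Fin n → Fin 2) → ℝ) :=
  Submodule.span ℝ {x | ∃ C, Good S k C ∧ x = ket C}

lemma ket_mem_W {k : ℕ} {C : Finset (Fin n)} (hC : Good S k C) : ket C ∈ W S k :=
  Submodule.subset_span ⟨C, hC, rfl⟩

lemma mulVec_mem_W {k : ℕ} {N : Matrix (Fin n → Fin 2) (Fin n → Fin 2) ℝ}
    (hN : ∀ C, Good S k C → N.mulVec (ket C) ∈ W S k) :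
    ∀ w ∈ W S k, N.mulVec w ∈ W S k := by
  intro w hw
  induction hw using Submodule.span_induction with
  | mem x hx =>
      obtain ⟨C, hC, rfl⟩ := hx
      exact hN C hC
  | zero => rw [Matrix.mulVec_zero]; exact (W S k).zero_mem
  | add x y _ _ hx hy => rw [Matrix.mulVec_add]; exact (W S k).add_mem hx hy
  | smul c x _ hx => rw [Matrix.mulVec_smul]; exact (W S k).smul_mem c hx

lemma mulVec_eq_on_W {k : ℕ} {M N : Matrix (Fin n → Fin 2) (Fin n → Fin 2) ℝ}
    (h : ∀ C, Good S k C → M.mulVec (ket C) = N.mulVec (ket C)) :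
    ∀ w ∈ W S k, M.mulVec w = N.mulVec w := by
  intro w hw
  induction hw using Submodule.span_induction with
  | mem x hx =>
      obtain ⟨C, hC, rfl⟩ := hx
      exact h C hC
  | zero => rw [Matrix.mulVec_zero, Matrix.mulVec_zero]
  | add x y _ _ hx hy => rw [Matrix.mulVec_add, Matrix.mulVec_add, hx, hy]
  | smul c x _ hx => rw [Matrix.mulVec_smul, Matrix.mulVec_smul, hx]

lemma pow_mulVec_mem_and_eq {k : ℕ} {M N : Matrix (Fin n → Fin 2) (Fin n → Fin 2) ℝ}
    (hMN : ∀ C, Good S k C → M.mulVec (ket C) = N.mulVec (ket C))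
    (hNW : ∀ C, Good S k C → N.mulVec (ket C) ∈ W S k)
    (m : ℕ) : ∀ w ∈ W S k, (N ^ m).mulVec w ∈ W S k ∧
      (M ^ m).mulVec w = (N ^ m).mulVec w := by
  induction m with
  | zero => intro w hw; simp [hw]
  | succ m ih =>
      intro w hw
      obtain ⟨hmem, heq⟩ := ih w hw
      constructor
      · rw [pow_succ', ← Matrix.mulVec_mulVec]
        exact mulVec_mem_W S hNW _ hmem
      · rw [pow_succ', pow_succ', ← Matrix.mulVec_mulVec, ← Matrix.mulVec_mulVec, heq]
        exact mulVec_eq_on_W S hMN _ hmem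

lemma sum_mulVec {α : Type*} {ι : Type*} [Fintype ι] (s : Finset α)
    (M : α → Matrix ι ι ℝ) (v : ι → ℝ) :
    (∑ a ∈ s, M a).mulVec v = ∑ a ∈ s, (M a).mulVec v := by
  classical
  induction s using Finset.induction_on with
  | empty => simp [Matrix.zero_mulVec]
  | @insert a s ha ih =>
      rw [Finset.sum_insert ha, Finset.sum_insert ha, Matrix.add_mulVec, ih]

/-! ### Matrix exponential and `mulVec` -/

lemma hasSum_exp_mulVec {ι : Type*} [Fintype ι] [DecidableEq ι]
    (X : Matrix ι ι ℝ) (w : ι → ℝ) :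
    HasSum (fun m : ℕ => ((m.factorial : ℝ)⁻¹) • (X ^ m).mulVec w)
      ((NormedSpace.exp X).mulVec w) := by
  letI : SeminormedRing (Matrix ι ι ℝ) := Matrix.linftyOpSemiNormedRing
  letI : NormedRing (Matrix ι ι ℝ) := Matrix.linftyOpNormedRing
  letI : NormedAlgebra ℝ (Matrix ι ι ℝ) := Matrix.linftyOpNormedAlgebra
  have h := NormedSpace.exp_series_hasSum_exp' (𝕂 := ℝ) X
  let T : Matrix ι ι ℝ →ₗ[ℝ] (ι → ℝ) :=
    { toFun := fun M => M.mulVec w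
      map_add' := fun M N => Matrix.add_mulVec M N w
      map_smul' := fun c M => by simp [Matrix.smul_mulVec] }
  have hT : Continuous T := T.continuous_of_finiteDimensional
  have h2 := h.map T.toAddMonoidHom hT
  have h3 : (T.toAddMonoidHom ∘ fun m : ℕ => ((m.factorial : ℝ)⁻¹) • X ^ m) =
      fun m : ℕ => ((m.factorial : ℝ)⁻¹) • (X ^ m).mulVec w := by
    funext m
    simp [T, Matrix.smul_mulVec]
  rwa [h3] at h2

lemma exp_mulVec_eq_of_pow {ι : Type*} [Fintype ι] [DecidableEq ι]
    {X Y : Matrix ι ι ℝ} {w : ι → ℝ}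
    (h : ∀ m : ℕ, (X ^ m).mulVec w = (Y ^ m).mulVec w) :
    (NormedSpace.exp X).mulVec w = (NormedSpace.exp Y).mulVec w := by
  have h1 := hasSum_exp_mulVec X w
  have h2 := hasSum_exp_mulVec Y w
  simp only [h] at h1
  exact h1.unique h2

lemma exp_mulVec_mem {k : ℕ} {X : Matrix (Fin n → Fin 2) (Fin n → Fin 2) ℝ}
    (hX : ∀ C, Good S k C → X.mulVec (ket C) ∈ W S k)
    {w : (Fin n → Fin 2) → ℝ} (hw : w ∈ W S k) :
    (NormedSpace.exp X).mulVec w ∈ W S k := by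
  have hpow : ∀ m : ℕ, (X ^ m).mulVec w ∈ W S k := by
    intro m
    induction m with
    | zero => simpa using hw
    | succ m ih =>
        rw [pow_succ', ← Matrix.mulVec_mulVec]
        exact mulVec_mem_W S hX _ ih
  have h := hasSum_exp_mulVec X w
  have hclosed : IsClosed ((W S k : Set ((Fin n → Fin 2) → ℝ))) :=
    Submodule.closed_of_finiteDimensional _
  refine hclosed.mem_of_tendsto h (Filter.Eventually.of_forall ?_)
  intro s
  exact Submodule.sum_mem _ (fun m _ => (W S k).smul_mem _ (hpow m))

/-! ### Commutation of the K-operators -/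

lemma opOn_K_comm (A B : Finset (Fin n)) :
    Commute (opOn Kmat A) (opOn Kmat B) := by
  unfold Commute SemiconjBy
  apply ext_of_mulVec_ket
  intro C
  rw [← Matrix.mulVec_mulVec, ← Matrix.mulVec_mulVec, opOn_K_mulVec, opOn_K_mulVec,
    opOn_K_mulVec, opOn_K_mulVec, symmDiff_assoc, symmDiff_assoc, symmDiff_comm A B]

lemma K_term_commute (τ : Finset (Fin n) → ℝ) (A B : Finset (Fin n)) :
    Commute (τ A • (opOn Kmat A - 1)) (τ B • (opOn Kmat B - 1)) := by
  apply Commute.smul_left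
  apply Commute.smul_right
  exact ((opOn_K_comm A B).sub_right (Commute.one_right _)).sub_left
    ((Commute.one_left _).sub_right (Commute.one_right _))

end PhyloAux

open PhyloAux

/-- For a pairwise-compatible split system `S` on `Fin n` (`n ≥ 2`) whose splits have
cardinality between `1` and `n−1`, with arbitrary weights `τ`, the `𝔏`-representation
`exp(∑_{|A|=1} τ_A M_A) ⋯ exp(∑_{|A|=n−1} τ_A M_A)·v` (factors in increasing cardinality
from left to right) equals the `K`-representation `exp(∑_{A∈S} τ_A (K^(A) − I))·v`, where
`v = π₀·|∅⟩ + π₁·|Fin n⟩`. -/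
theorem L_rep_eq_K_rep (n : ℕ) (hn : 2 ≤ n) (S : Finset (Finset (Fin n)))
    (hcard : ∀ A ∈ S, 1 ≤ A.card ∧ A.card ≤ n - 1)
    (hcompat : ∀ A ∈ S, ∀ B ∈ S, A ⊆ B ∨ B ⊆ A ∨ A ∩ B = ∅)
    (τ : Finset (Fin n) → ℝ) (π₀ π₁ : ℝ) :
    (((List.range (n - 1)).map fun j =>
          NormedSpace.exp
            (∑ A ∈ S.filter (fun A => A.card = j + 1), τ A • MA A)).prod).mulVec
        (π₀ • ket (∅ : Finset (Fin n)) + π₁ • ket (Finset.univ : Finset (Fin n))) =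
      (NormedSpace.exp
          (∑ A ∈ S, τ A •
            (opOn Kmat A - (1 : Matrix (Fin n → Fin 2) (Fin n → Fin 2) ℝ)))).mulVec
        (π₀ • ket (∅ : Finset (Fin n)) + π₁ • ket (Finset.univ : Finset (Fin n))) := by
  classical
  set v : (Fin n → Fin 2) → ℝ :=
    π₀ • ket (∅ : Finset (Fin n)) + π₁ • ket (Finset.univ : Finset (Fin n)) with hv
  -- the K-generators
  set NK : Finset (Finset (Fin n)) → Matrix (Fin n → Fin 2) (Fin n → Fin 2) ℝ :=
    fun t => ∑ A ∈ t, τ A • (opOn Kmat A - 1) with hNK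
  -- v lies in every W S k
  have hvW : ∀ k, v ∈ W S k := by
    intro k
    exact (W S k).add_mem ((W S k).smul_mem _ (ket_mem_W S (good_empty S k)))
      ((W S k).smul_mem _ (ket_mem_W S (good_univ S k)))
  -- key action lemma for K-terms
  have hKact : ∀ (A C : Finset (Fin n)),
      (τ A • (opOn Kmat A - 1)).mulVec (ket C) = τ A • (ket (symmDiff C A) - ket C) := by
    intro A C
    rw [Matrix.smul_mulVec, Matrix.sub_mulVec, Matrix.one_mulVec, opOn_K_mulVec]
  -- NK t action on kets
  have hNKact : ∀ (t : Finset (Finset (Fin n))) (C : Finset (Fin n)),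
      (NK t).mulVec (ket C) = ∑ A ∈ t, τ A • (ket (symmDiff C A) - ket C) := by
    intro t C
    simp only [hNK]
    rw [PhyloAux.sum_mulVec]
    exact Finset.sum_congr rfl (fun A _ => hKact A C)
  -- goodness propagation
  have hgoodΔ : ∀ (k : ℕ) (C A : Finset (Fin n)), Good S k C → A ∈ S → k ≤ A.card →
      Good S k (symmDiff C A) := by
    intro k C A hC hA hk
    apply good_symmDiff S hC
    intro A' hA' hcard'
    rcases hcompat A' hA' A hA with h | h | h
    · exact Or.inl h
    · have : A = A' := Finset.eq_of_subset_of_card_le h (le_trans hcard' hk)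
      exact Or.inl (this ▸ Finset.Subset.refl A')
    · exact Or.inr h
  -- membership of NK t action in W S k
  have hNKmem : ∀ (k : ℕ) (t : Finset (Finset (Fin n))), (∀ A ∈ t, A ∈ S ∧ k ≤ A.card) →
      ∀ C, Good S k C → (NK t).mulVec (ket C) ∈ W S k := by
    intro k t ht C hC
    rw [hNKact]
    apply Submodule.sum_mem
    intro A hA
    exact (W S k).smul_mem _ ((W S k).sub_mem
      (ket_mem_W S (hgoodΔ k C A hC (ht A hA).1 (ht A hA).2)) (ket_mem_W S hC))
  -- equality of M-sum and K-sum on good kets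
  have hMKeq : ∀ (k : ℕ) (C : Finset (Fin n)), Good S k C →
      (∑ A ∈ S.filter (fun A => A.card = k), τ A • MA A).mulVec (ket C) =
      (NK (S.filter (fun A => A.card = k))).mulVec (ket C) := by
    intro k C hC
    simp only [hNK]
    rw [ PhyloAux.sum_mulVec, PhyloAux.sum_mulVec]
    apply Finset.sum_congr rfl
    intro A hA
    rw [Finset.mem_filter] at hA
    obtain ⟨hAS, hAcard⟩ := hA
    rw [Matrix.smul_mulVec, MA_mulVec, hKact]
    congr 1
    rcases hC A hAS (le_of_eq hAcard) with h | h
    · have h1 : C ∪ A = C := Finset.union_eq_left.mpr h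
      have h2 : symmDiff C A = C \ A := by
        ext x
        simp only [Finset.mem_symmDiff, Finset.mem_sdiff]
        constructor
        · rintro (⟨h1', h2'⟩ | ⟨h1', h2'⟩)
          · exact ⟨h1', h2'⟩
          · exact absurd (h h1') h2'
        · rintro ⟨h1', h2'⟩; exact Or.inl ⟨h1', h2'⟩
      rw [h1, h2]
      abel
    · have h1 : C \ A = C := by
        ext x
        simp only [Finset.mem_sdiff]
        constructor
        · rintro ⟨hx, _⟩; exact hx
        · intro hx
          refine ⟨hx, fun hxA => ?_⟩
          have : x ∈ A ∩ C := Finset.mem_inter.mpr ⟨hxA, hx⟩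
          rw [h] at this
          exact absurd this (Finset.notMem_empty x)
      have h2 : symmDiff C A = C ∪ A := by
        ext x
        simp only [Finset.mem_symmDiff, Finset.mem_union]
        constructor
        · rintro (⟨h1', _⟩ | ⟨h1', _⟩)
          · exact Or.inl h1'
          · exact Or.inr h1'
        · intro hx
          rcases hx with hx | hx
          · refine Or.inl ⟨hx, fun hxA => ?_⟩
            have : x ∈ A ∩ C := Finset.mem_inter.mpr ⟨hxA, hx⟩
            rw [h] at this
            exact absurd this (Finset.notMem_empty x)
          · refine Or.inr ⟨hx, fun hxC => ?_⟩
            have : x ∈ A ∩ C := Finset.mem_inter.mpr ⟨hx, hxC⟩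
            rw [h] at this
            exact absurd this (Finset.notMem_empty x)
      rw [h1, h2]
      abel
  -- the intermediate vectors
  set Rv : ℕ → ((Fin n → Fin 2) → ℝ) :=
    fun m => (NormedSpace.exp (NK (S.filter (fun A => m < A.card)))).mulVec v with hRv
  -- Rv m is in W S (m+1)  (all big splits have card ≥ m+1)
  have hRvW : ∀ m : ℕ, Rv m ∈ W S m := by
    intro m
    apply exp_mulVec_mem S _ (hvW m)
    intro C hC
    apply hNKmem m _ _ C hC
    intro A hA
    rw [Finset.mem_filter] at hA
    exact ⟨hA.1, le_of_lt hA.2⟩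
  -- the key step
  have hstep : ∀ m : ℕ,
      (NormedSpace.exp (∑ A ∈ S.filter (fun A => A.card = m + 1), τ A • MA A)).mulVec
        (Rv (m + 1)) = Rv m := by
    intro m
    -- split the filter
    have hsplit : NK (S.filter (fun A => m < A.card)) =
        NK (S.filter (fun A => A.card = m + 1)) + NK (S.filter (fun A => m + 1 < A.card)) := by
      simp only [hNK]
      rw [← Finset.sum_filter_add_sum_filter_not (S.filter (fun A => m < A.card))
        (fun A => A.card = m + 1)]
      congr 1
      · congr 1
        rw [Finset.filter_filter]
        apply Finset.filter_congr
        intro A _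
        constructor
        · rintro ⟨_, h⟩; exact h
        · intro h; omega
      · congr 1
        rw [Finset.filter_filter]
        apply Finset.filter_congr
        intro A _
        constructor
        · rintro ⟨h1, h2⟩; omega
        · intro h; omega
    have hcomm : Commute (NK (S.filter (fun A => A.card = m + 1)))
        (NK (S.filter (fun A => m + 1 < A.card))) := by
      simp only [hNK]
      apply Commute.sum_left
      intro A _
      apply Commute.sum_right
      intro B _
      exact K_term_commute τ A B
    have hexp : NormedSpace.exp (NK (S.filter (fun A => m < A.card))) =
        NormedSpace.exp (NK (S.filter (fun A => A.card = m + 1))) *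
          NormedSpace.exp (NK (S.filter (fun A => m + 1 < A.card))) := by
      rw [hsplit]
      exact Matrix.exp_add_of_commute _ _ hcomm
    have hRm : Rv m = (NormedSpace.exp (NK (S.filter (fun A => A.card = m + 1)))).mulVec
        (Rv (m + 1)) := by
      simp only [hRv]
      rw [hexp, ← Matrix.mulVec_mulVec]
    rw [hRm]
    -- now apply exp_mulVec_eq_of_pow on W S (m+1)
    apply exp_mulVec_eq_of_pow
    intro p
    have hMN : ∀ C, Good S (m + 1) C →
        (∑ A ∈ S.filter (fun A => A.card = m + 1), τ A • MA A).mulVec (ket C) =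
        (NK (S.filter (fun A => A.card = m + 1))).mulVec (ket C) :=
      fun C hC => hMKeq (m + 1) C hC
    have hNW : ∀ C, Good S (m + 1) C →
        (NK (S.filter (fun A => A.card = m + 1))).mulVec (ket C) ∈ W S (m + 1) := by
      intro C hC
      apply hNKmem (m + 1) _ _ C hC
      intro A hA
      rw [Finset.mem_filter] at hA
      exact ⟨hA.1, le_of_eq hA.2.symm⟩
    exact (pow_mulVec_mem_and_eq S hMN hNW p _ (hRvW (m + 1))).2
  -- main induction on the list
  have hmain : ∀ m : ℕ,
      (((List.range m).map fun j =>
          NormedSpace.exp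
            (∑ A ∈ S.filter (fun A => A.card = j + 1), τ A • MA A)).prod).mulVec (Rv m) =
        Rv 0 := by
    intro m
    induction m with
    | zero => simp
    | succ m ih =>
        rw [List.range_succ, List.map_append, List.prod_append]
        simp only [List.map_cons, List.map_nil, List.prod_cons, List.prod_nil, mul_one]
        rw [← Matrix.mulVec_mulVec, hstep m]
        exact ih
  -- conclude
  have hRtop : Rv (n - 1) = v := by
    simp only [hRv]
    have : S.filter (fun A => n - 1 < A.card) = ∅ := by
      rw [Finset.filter_eq_empty_iff]
      intro A hA
      have := (hcard A hA).2
      omega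
    rw [this]
    have : NK ∅ = 0 := by simp only [hNK]; simp
    rw [this, NormedSpace.exp_zero, Matrix.one_mulVec]
  have hR0 : Rv 0 = (NormedSpace.exp
      (∑ A ∈ S, τ A • (opOn Kmat A - (1 : Matrix (Fin n → Fin 2) (Fin n → Fin 2) ℝ)))).mulVec
      v := by
    have hfilter : S.filter (fun A => 0 < A.card) = S := by
      apply Finset.filter_true_of_mem
      intro A hA
      have := (hcard A hA).1
      omega
    simp only [hRv, hNK, hfilter]
  calc (((List.range (n - 1)).map fun j =>
          NormedSpace.exp
            (∑ A ∈ S.filter (fun A => A.card = j + 1), τ A • MA A)).prod).mulVec v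
      = (((List.range (n - 1)).map fun j =>
          NormedSpace.exp
            (∑ A ∈ S.filter (fun A => A.card = j + 1), τ A • MA A)).prod).mulVec
          (Rv (n - 1)) := by rw [hRtop]
    _ = Rv 0 := hmain (n - 1)
    _ = _ := hR0
end
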